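/- arXiv:1702.08225 — 13 statements merged into one kernel-verified Lean document; each statement's English description precedes it below -/
import Mathlib

section
/- Let Γ be a numerical semigroup, e' a nonzero element of Γ, and m ∈ Γ. Then Ap(Γ_{e'}, e' + m) = (e' + Ap(Γ, m)) ∪ (e' + m + (Ap(Γ, e') \ {0})) ∪ {0}. -/
/-- A numerical semigroup, viewed as a set of integers: contained in ℕ,
contains 0, closed under addition, with finite complement in ℕ. -/
def IsNumericalSemigroup (Γ : Set ℤ) : Prop :=
  (∀ n ∈ Γ, 0 ≤ n) ∧ (0 : ℤ) ∈ Γ ∧ (∀ a ∈ Γ, ∀ b ∈ Γ, a + b ∈ Γ) ∧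
    {n : ℤ | 0 ≤ n ∧ n ∉ Γ}.Finite

/-- The set of divisors of `x` in `Γ`. -/
def SetDiv (Γ : Set ℤ) (x : ℤ) : Set ℤ := {s ∈ Γ | x - s ∈ Γ}

/-- The Apéry set of `Γ` with respect to an integer `x`. -/
def Ap (Γ : Set ℤ) (x : ℤ) : Set ℤ := {m ∈ Γ | m - x ∉ Γ}

/-- The Arf property. -/
def IsArf (Γ : Set ℤ) : Prop :=
  ∀ x ∈ Γ, ∀ y ∈ Γ, ∀ z ∈ Γ, z ≤ y → y ≤ x → x + y - z ∈ Γ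

/-- The translate Γ_{e'} = {0} ∪ (e' + Γ). -/
def ShiftSG (Γ : Set ℤ) (e' : ℤ) : Set ℤ := {0} ∪ (fun s => e' + s) '' Γ

/-- `c` is the conductor of `Γ`: least integer with `c + ℕ ⊆ Γ`. -/
def IsConductor (Γ : Set ℤ) (c : ℤ) : Prop :=
  (∀ n, c ≤ n → n ∈ Γ) ∧ ∀ c', (∀ n, c' ≤ n → n ∈ Γ) → c ≤ c'

/-- `e` is the multiplicity of `Γ`: its least nonzero element. -/
def IsMultiplicity (Γ : Set ℤ) (e : ℤ) : Prop :=
  e ∈ Γ ∧ e ≠ 0 ∧ ∀ s ∈ Γ, s ≠ 0 → e ≤ s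

/-- The genus of `Γ`: the number of gaps. -/
noncomputable def genus (Γ : Set ℤ) : ℕ := {n : ℤ | 0 ≤ n ∧ n ∉ Γ}.ncard

/-- `m` is irreducible in `Γ` if its only divisors are `0` and `m`. -/
def IrreducibleIn (Γ : Set ℤ) (m : ℤ) : Prop :=
  m ∈ Γ ∧ m ≠ 0 ∧ SetDiv Γ m = {0, m}

/-- The second Feng-Rao number of `Γ`, with multiplicity `e`. -/
noncomputable def FengRaoNumber2 (Γ : Set ℤ) (e : ℤ) : ℕ :=
  sInf {n : ℕ | ∃ x : ℤ, 1 ≤ x ∧ x ≤ e ∧ (Ap Γ x).ncard = n}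

/-- The first (classical) Feng-Rao distance of `m` in `Γ`. -/
noncomputable def FengRaoDist1 (Γ : Set ℤ) (m : ℤ) : ℕ :=
  sInf {n : ℕ | ∃ m₁ ∈ Γ, m ≤ m₁ ∧ (SetDiv Γ m₁).ncard = n}

/-- The second (generalized) Feng-Rao distance of `m` in `Γ`. -/
noncomputable def FengRaoDist2 (Γ : Set ℤ) (m : ℤ) : ℕ :=
  sInf {n : ℕ | ∃ m₁ ∈ Γ, ∃ m₂ ∈ Γ, m ≤ m₁ ∧ m₁ < m₂ ∧
    (SetDiv Γ m₁ ∪ SetDiv Γ m₂).ncard = n}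

theorem apery_trans (Γ : Set ℤ) (hΓ : IsNumericalSemigroup Γ)
    (e' : ℤ) (he' : e' ∈ Γ) (hne : e' ≠ 0) (m : ℤ) (hm : m ∈ Γ) :
    Ap (ShiftSG Γ e') (e' + m) =
      ((fun s => e' + s) '' Ap Γ m) ∪
      ((fun s => e' + m + s) '' (Ap Γ e' \ {0})) ∪ {0} := by
  obtain ⟨hpos, h0, hadd, -⟩ := hΓ
  have hmnn : 0 ≤ m := hpos m hm
  have he'pos : 0 < e' := lt_of_le_of_ne (hpos e' he') (Ne.symm hne)
  ext x
  simp only [Ap, ShiftSG, Set.mem_setOf_eq, Set.mem_union, Set.mem_image,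
    Set.mem_singleton_iff, Set.mem_diff]
  constructor
  · rintro ⟨hx0 | ⟨s, hs, rfl⟩, hx2⟩
    · right; exact hx0
    · push_neg at hx2
      obtain ⟨hne0, hnot⟩ := hx2
      left
      by_cases hsm : s - m ∈ Γ
      · right
        refine ⟨s - m, ⟨⟨hsm, ?_⟩, ?_⟩, by ring⟩
        · intro hcon
          exact (hnot (s - m - e') hcon) (by ring)
        · intro h
          exact hne0 (by linarith [sub_eq_zero.mp h])
      · left
        exact ⟨s, ⟨hs, hsm⟩, rfl⟩
  · rintro ((⟨a, ⟨ha, ham⟩, rfl⟩ | ⟨b, ⟨⟨hb, hbe⟩, hb0⟩, rfl⟩) | rfl)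
    · refine ⟨Or.inr ⟨a, ha, rfl⟩, ?_⟩
      rintro (h | ⟨t, ht, htt⟩)
      · exact ham (by rw [show a - m = (0:ℤ) by linarith]; exact h0)
      · have : a - m = e' + t := by linarith
        exact ham (this ▸ hadd e' he' t ht)
    · refine ⟨Or.inr ⟨m + b, hadd m hm b hb, by ring⟩, ?_⟩
      rintro (h | ⟨t, ht, htt⟩)
      · exact hb0 (by linarith)
      · exact hbe (by rw [show b - e' = t by linarith]; exact ht)
    · refine ⟨Or.inl rfl, ?_⟩
      rintro (h | ⟨t, ht, htt⟩)
      · linarith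
      · have := hpos t ht; linarith
end

section
/- Let Γ be an Arf numerical semigroup with elements 0 = ρ₁ < ρ₂ < ⋯ and distances d_i = ρ_{i+1} − ρ_i. If d_i < d_{i−1}, then Ap(Γ, −d_i) = {ρ₁, …, ρ_{i−1}}. -/
theorem apery_neg_d (Γ : Set ℤ) (hΓ : IsNumericalSemigroup Γ)
    (hA : IsArf Γ) (ρ : ℕ → ℤ)
    (hmono : ∀ i j, 1 ≤ i → i < j → ρ i < ρ j)
    (hrange : Γ = {x : ℤ | ∃ i : ℕ, 1 ≤ i ∧ ρ i = x})
    (i : ℕ) (hi : 2 ≤ i)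
    (hd : ρ (i + 1) - ρ i < ρ i - ρ (i - 1)) :
    Ap Γ (-(ρ (i + 1) - ρ i)) = ρ '' Set.Icc 1 (i - 1) := by
  obtain ⟨hpos, h0, hadd, hfin⟩ := hΓ
  set d := ρ (i+1) - ρ i with hdval
  have hρΓ : ∀ j, 1 ≤ j → ρ j ∈ Γ := by
    intro j hj; rw [hrange]; exact ⟨j, hj, rfl⟩
  have hmem : ∀ m ∈ Γ, ∃ j, 1 ≤ j ∧ ρ j = m := by
    intro m hm; rw [hrange] at hm; exact hm
  have hmono' : ∀ a b, 1 ≤ a → a ≤ b → ρ a ≤ ρ b := by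
    intro a b ha hab
    rcases eq_or_lt_of_le hab with h | h
    · rw [h]
    · exact (hmono a b ha h).le
  have hlt : ∀ a b, 1 ≤ a → 1 ≤ b → ρ a < ρ b → a < b := by
    intro a b ha hb h
    by_contra hc
    push_neg at hc
    exact absurd (hmono' b a hb hc) (not_le.mpr h)
  have hdpos : 0 < d := by
    have := hmono i (i+1) (by omega) (by omega); omega
  have hdec : ∀ j, 1 ≤ j → ρ (j+2) - ρ (j+1) ≤ ρ (j+1) - ρ j := by
    intro j hj
    have harf := hA (ρ (j+1)) (hρΓ _ (by omega)) (ρ (j+1)) (hρΓ _ (by omega))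
      (ρ j) (hρΓ _ hj) (hmono' j (j+1) hj (by omega)) le_rfl
    obtain ⟨k, hk1, hk⟩ := hmem _ harf
    have h1 : ρ (j+1) < ρ k := by
      have := hmono j (j+1) hj (by omega); omega
    have h2 : j + 1 < k := hlt _ _ (by omega) hk1 h1
    have := hmono' (j+2) k (by omega) (by omega)
    omega
  have hdec2 : ∀ a b, 1 ≤ a → a ≤ b → ρ (b+1) - ρ b ≤ ρ (a+1) - ρ a := by
    intro a b ha hab
    induction b, hab using Nat.le_induction with
    | base => exact le_rfl
    | succ n hn ih => exact le_trans (hdec n (by omega)) ih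
  ext m
  simp only [Ap, Set.mem_setOf_eq, sub_neg_eq_add, Set.mem_image, Set.mem_Icc]
  constructor
  · rintro ⟨hmΓ, hnot⟩
    obtain ⟨j, hj1, rfl⟩ := hmem m hmΓ
    refine ⟨j, ⟨hj1, ?_⟩, rfl⟩
    by_contra hc
    push_neg at hc
    rcases eq_or_lt_of_le (show i ≤ j by omega) with hji | hji
    · apply hnot
      have h1 : ρ j + d = ρ (i+1) := by rw [← hji]; omega
      rw [h1]; exact hρΓ _ (by omega)
    · have harf := hA (ρ j) (hρΓ _ hj1) (ρ (i+1)) (hρΓ _ (by omega))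
        (ρ i) (hρΓ _ (by omega)) (hmono' i (i+1) (by omega) (by omega))
        (hmono' (i+1) j (by omega) (by omega))
      apply hnot
      have h1 : ρ j + d = ρ j + ρ (i+1) - ρ i := by omega
      rw [h1]; exact harf
  · rintro ⟨j, ⟨hj1, hj2⟩, rfl⟩
    refine ⟨hρΓ _ hj1, ?_⟩
    intro hc
    obtain ⟨k, hk1, hk⟩ := hmem _ hc
    have hjk : j < k := hlt j k hj1 hk1 (by omega)
    obtain ⟨i', rfl⟩ : ∃ i', i = i' + 1 := ⟨i-1, by omega⟩
    simp only [Nat.add_sub_cancel] at hd hj2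
    have hkle : ρ k < ρ (i'+1) := by
      have h1 : ρ j ≤ ρ i' := hmono' j i' hj1 hj2
      omega
    have hki : k < i' + 1 := hlt k (i'+1) hk1 (by omega) hkle
    obtain ⟨k', rfl⟩ : ∃ k', k = k' + 1 := ⟨k-1, by omega⟩
    have h4 := hdec2 k' i' (by omega) (by omega)
    have h5 := hmono' j k' hj1 (by omega)
    omega
end

section
/- Let Γ be an Arf numerical semigroup with distances d_i = ρ_{i+1} − ρ_i between consecutive elements. If d_i < d_{i−1}, then the cardinality of Ap(Γ, d_i) equals i − 1 + d_i. -/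
theorem card_apery_d (Γ : Set ℤ) (hΓ : IsNumericalSemigroup Γ)
    (hA : IsArf Γ) (ρ : ℕ → ℤ)
    (hmono : ∀ i j, 1 ≤ i → i < j → ρ i < ρ j)
    (hrange : Γ = {x : ℤ | ∃ i : ℕ, 1 ≤ i ∧ ρ i = x})
    (i : ℕ) (hi : 2 ≤ i)
    (hd : ρ (i + 1) - ρ i < ρ i - ρ (i - 1)) :
    ((Ap Γ (ρ (i + 1) - ρ i)).ncard : ℤ) = (i : ℤ) - 1 + (ρ (i + 1) - ρ i) := by
  obtain ⟨hnn, h0, hadd, hfin⟩ := hΓ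
  set d : ℤ := ρ (i + 1) - ρ i with hdd
  have hmem : ∀ x, x ∈ Γ ↔ ∃ k : ℕ, 1 ≤ k ∧ ρ k = x := by
    intro x; rw [hrange]; exact Iff.rfl
  have hρmem : ∀ k, 1 ≤ k → ρ k ∈ Γ := fun k hk => (hmem _).2 ⟨k, hk, rfl⟩
  have hmono' : ∀ j k, 1 ≤ j → j ≤ k → ρ j ≤ ρ k := by
    intro j k hj hjk
    rcases eq_or_lt_of_le hjk with h | h
    · rw [h]
    · exact (hmono j k hj h).le
  have hlt_iff : ∀ j k, 1 ≤ j → 1 ≤ k → (ρ j < ρ k ↔ j < k) := by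
    intro j k hj hk
    constructor
    · intro h
      by_contra hc
      push_neg at hc
      exact absurd (hmono' k j hk hc) (not_le.2 h)
    · exact hmono j k hj
  have hd1 : 1 ≤ d := by
    have := hmono i (i + 1) (by omega) (by omega)
    omega
  have hnext : ∀ j x, 1 ≤ j → x ∈ Γ → ρ j < x → ρ (j + 1) ≤ x := by
    intro j x hj hx hlt
    obtain ⟨k, hk, rfl⟩ := (hmem x).1 hx
    have : j < k := (hlt_iff j k hj hk).1 hlt
    exact hmono' (j + 1) k (by omega) (by omega)
  have hgapstep : ∀ j, 1 ≤ j → ρ (j + 1 + 1) - ρ (j + 1) ≤ ρ (j + 1) - ρ j := by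
    intro j hj
    have harf : ρ (j + 1) + ρ (j + 1) - ρ j ∈ Γ :=
      hA _ (hρmem _ (by omega)) _ (hρmem _ (by omega)) _ (hρmem _ hj)
        (hmono' j (j + 1) hj (by omega)) le_rfl
    have h1 : ρ (j + 1) < ρ (j + 1) + ρ (j + 1) - ρ j := by
      have := hmono j (j + 1) hj (by omega); omega
    have := hnext (j + 1) _ (by omega) harf h1
    omega
  have hgap : ∀ j k, 1 ≤ j → j ≤ k → ρ (k + 1) - ρ k ≤ ρ (j + 1) - ρ j := by
    intro j k hj hjk
    induction k with
    | zero => omega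
    | succ n ih =>
      rcases Nat.lt_or_ge j (n + 1) with h | h
      · have h2 := ih (by omega)
        have h3 := hgapstep n (by omega)
        omega
      · have : j = n + 1 := by omega
        subst this
        omega
  have hF : ∀ s, s ∈ Γ → ρ i ≤ s → s + d ∈ Γ := by
    intro s hs hsi
    rcases eq_or_lt_of_le hsi with h | h
    · have heq : s + d = ρ (i + 1) := by omega
      rw [heq]; exact hρmem _ (by omega)
    · have h2 : ρ (i + 1) ≤ s := hnext i s (by omega) hs h
      have harf := hA s hs (ρ (i + 1)) (hρmem _ (by omega)) (ρ i) (hρmem _ (by omega))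
        (hmono' i (i + 1) (by omega) (by omega)) h2
      have heq : s + ρ (i + 1) - ρ i = s + d := by omega
      rwa [heq] at harf
  have hG : ∀ s, s ∈ Γ → s < ρ i → s + d ∉ Γ := by
    intro s hs hsi hcon
    obtain ⟨j, hj, rfl⟩ := (hmem s).1 hs
    have hji : j < i := (hlt_iff j i hj (by omega)).1 hsi
    have hgj : ρ (i - 1 + 1) - ρ (i - 1) ≤ ρ (j + 1) - ρ j := hgap j (i - 1) hj (by omega)
    have he : i - 1 + 1 = i := by omega
    rw [he] at hgj
    have hlt2 : ρ j < ρ j + d := by omega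
    have := hnext j (ρ j + d) hj hcon hlt2
    omega
  obtain ⟨b, hb⟩ := hfin.bddAbove
  have hcond : ∀ n : ℤ, max b 0 + 1 ≤ n → n ∈ Γ := by
    intro n hn
    have h1 : (0 : ℤ) ≤ max b 0 := le_max_right _ _
    have h2 : b ≤ max b 0 := le_max_left _ _
    by_contra hcon
    have hmem' : n ∈ {n : ℤ | 0 ≤ n ∧ n ∉ Γ} := ⟨by omega, hcon⟩
    have := hb hmem'
    omega
  set C : ℤ := max b 0 + 1 with hCdef
  obtain ⟨Q, hCQ, hρQ⟩ : ∃ Q : ℤ, C ≤ Q ∧ ρ i ≤ Q :=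
    ⟨max C (ρ i), le_max_left _ _, le_max_right _ _⟩
  set T : ℤ := Q + d with hTdef
  have hρ0 : 0 ≤ ρ i := hnn _ (hρmem i (by omega))
  -- the key decomposition
  have hAp : Ap Γ d = (Γ ∩ Set.Ico 0 T) \ ((fun s => s + d) '' (Γ ∩ Set.Ico (ρ i) Q)) := by
    ext m
    simp only [Ap, Set.mem_diff, Set.mem_inter_iff, Set.mem_Ico, Set.mem_image,
      Set.mem_setOf_eq]
    constructor
    · rintro ⟨hm, hmd⟩
      refine ⟨⟨hm, hnn m hm, ?_⟩, ?_⟩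
      · by_contra hc
        push_neg at hc
        exact hmd (hcond _ (by omega))
      · rintro ⟨s, ⟨hsΓ, hs1, hs2⟩, rfl⟩
        have : s + d - d = s := by ring
        rw [this] at hmd
        exact hmd hsΓ
    · rintro ⟨⟨hm, hm0, hmT⟩, hnB⟩
      refine ⟨hm, fun hc => ?_⟩
      have hge : ρ i ≤ m - d := by
        by_contra hlt
        push_neg at hlt
        have : m - d + d = m := by ring
        exact hG (m - d) hc hlt (by rw [this]; exact hm)
      exact hnB ⟨m - d, ⟨hc, hge, by omega⟩, by ring⟩
  have hBA : (fun s => s + d) '' (Γ ∩ Set.Ico (ρ i) Q) ⊆ Γ ∩ Set.Ico 0 T := by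
    rintro x ⟨s, ⟨hsΓ, h1, h2⟩, rfl⟩
    simp only [Set.mem_inter_iff, Set.mem_Ico]
    have := hnn s hsΓ
    exact ⟨hF s hsΓ h1, by omega, by omega⟩
  have hsplit : Γ ∩ Set.Ico 0 T =
      (Γ ∩ Set.Ico 0 (ρ i)) ∪ ((Γ ∩ Set.Ico (ρ i) Q) ∪ (Γ ∩ Set.Ico Q T)) := by
    ext x
    simp only [Set.mem_inter_iff, Set.mem_union, Set.mem_Ico]
    constructor
    · rintro ⟨hx, h0x, hxT⟩
      rcases lt_or_ge x (ρ i) with h | h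
      · exact Or.inl ⟨hx, h0x, h⟩
      · rcases lt_or_ge x Q with h2 | h2
        · exact Or.inr (Or.inl ⟨hx, h, h2⟩)
        · exact Or.inr (Or.inr ⟨hx, h2, hxT⟩)
    · rintro (⟨hx, h1, h2⟩ | ⟨hx, h1, h2⟩ | ⟨hx, h1, h2⟩) <;> exact ⟨hx, by omega, by omega⟩
  have hS1 : Γ ∩ Set.Ico 0 (ρ i) = ρ '' Set.Icc 1 (i - 1) := by
    ext x
    simp only [Set.mem_inter_iff, Set.mem_Ico, Set.mem_image, Set.mem_Icc]
    constructor
    · rintro ⟨hx, h0, hlt⟩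
      obtain ⟨k, hk, rfl⟩ := (hmem x).1 hx
      have := (hlt_iff k i hk (by omega)).1 hlt
      exact ⟨k, ⟨hk, by omega⟩, rfl⟩
    · rintro ⟨k, ⟨hk1, hk2⟩, rfl⟩
      have hkΓ := hρmem k hk1
      exact ⟨hkΓ, hnn _ hkΓ, hmono k i hk1 (by omega)⟩
  have hinj : Set.InjOn ρ (Set.Icc 1 (i - 1)) := by
    intro a ha b hb hab
    by_contra hne
    rcases Nat.lt_or_ge a b with h | h
    · exact absurd hab (ne_of_lt (hmono a b ha.1 h))
    · have hba : b < a := by omega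
      exact absurd hab.symm (ne_of_lt (hmono b a hb.1 hba))
  have hS1card : (Γ ∩ Set.Ico 0 (ρ i)).ncard = i - 1 := by
    rw [hS1, Set.ncard_image_of_injOn hinj, ← Finset.coe_Icc, Set.ncard_coe_finset,
      Nat.card_Icc]
    omega
  have hS3 : Γ ∩ Set.Ico Q T = Set.Ico Q T := by
    apply Set.inter_eq_self_of_subset_right
    intro x hx
    exact hcond x (le_trans hCQ hx.1)
  have hS3card : (Γ ∩ Set.Ico Q T).ncard = d.toNat := by
    rw [hS3, ← Finset.coe_Ico, Set.ncard_coe_finset, Int.card_Ico]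
    omega
  have hfin1 : (Γ ∩ Set.Ico 0 (ρ i)).Finite :=
    (Set.finite_Ico _ _).subset Set.inter_subset_right
  have hfin2 : (Γ ∩ Set.Ico (ρ i) Q).Finite :=
    (Set.finite_Ico _ _).subset Set.inter_subset_right
  have hfin3 : (Γ ∩ Set.Ico Q T).Finite :=
    (Set.finite_Ico _ _).subset Set.inter_subset_right
  have hfinB : ((fun s => s + d) '' (Γ ∩ Set.Ico (ρ i) Q)).Finite := hfin2.image _
  have hdisj12 : Disjoint (Γ ∩ Set.Ico 0 (ρ i)) ((Γ ∩ Set.Ico (ρ i) Q) ∪ (Γ ∩ Set.Ico Q T)) := by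
    rw [Set.disjoint_left]
    rintro x ⟨_, _, h2⟩ (⟨_, h3, _⟩ | ⟨_, h3, _⟩) <;> omega
  have hdisj23 : Disjoint (Γ ∩ Set.Ico (ρ i) Q) (Γ ∩ Set.Ico Q T) := by
    rw [Set.disjoint_left]
    rintro x ⟨_, _, h2⟩ ⟨_, h3, _⟩
    omega
  have hAcard : (Γ ∩ Set.Ico 0 T).ncard =
      (i - 1) + ((Γ ∩ Set.Ico (ρ i) Q).ncard + d.toNat) := by
    rw [hsplit, Set.ncard_union_eq hdisj12 hfin1 (hfin2.union hfin3),
      Set.ncard_union_eq hdisj23 hfin2 hfin3, hS1card, hS3card]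
  have hBcard : ((fun s => s + d) '' (Γ ∩ Set.Ico (ρ i) Q)).ncard
      = (Γ ∩ Set.Ico (ρ i) Q).ncard :=
    Set.ncard_image_of_injective _ (add_left_injective d)
  have hApcard : (Ap Γ d).ncard = (i - 1) + d.toNat := by
    rw [hAp, Set.ncard_diff hBA (hfin1.union (hfin2.union hfin3) |>.subset (hsplit ▸ hBA)),
      hAcard, hBcard]
    omega
  rw [hApcard]
  omega
end

section
/- Let Γ be an Arf numerical semigroup with distances d_i. If d_j ≤ x < d_{j−1} for a positive integer x, then Ap(Γ, −d_j) ⊆ Ap(Γ, −x), and consequently #Ap(Γ, x) ≥ #Ap(Γ, d_j). -/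
lemma count_key (Γ : Set ℤ) (hsub : ∀ n ∈ Γ, 0 ≤ n) (c N y : ℤ)
    (hc : ∀ n, c ≤ n → n ∈ Γ) (hy : 0 < y) (hN : c + y ≤ N) :
    (Γ ∩ Set.Ico 0 N).ncard + (Ap Γ (-y)).ncard
      = (Ap Γ y).ncard + (Γ ∩ Set.Ico 0 (N - y)).ncard := by
  have hc0 : 0 ≤ c := hsub c (hc c le_rfl)
  set D : Set ℤ := {n | n ∈ Γ ∧ n + y ∈ Γ} ∩ Set.Ico 0 (N - y) with hD
  have eq1 : Γ ∩ Set.Ico 0 N = Ap Γ y ∪ ((fun n => n + y) '' D) := by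
    ext m
    simp only [Set.mem_inter_iff, Set.mem_Ico, Ap, Set.mem_setOf_eq, Set.mem_union,
      Set.mem_image, hD]
    constructor
    · rintro ⟨hm, h0, hN'⟩
      by_cases hmy : m - y ∈ Γ
      · exact Or.inr ⟨m - y, ⟨⟨hmy, by simpa using hm⟩, hsub _ hmy, by omega⟩, by ring⟩
      · exact Or.inl ⟨hm, hmy⟩
    · rintro (⟨hm, hmy⟩ | ⟨n, ⟨⟨hn, hny⟩, h0, hn'⟩, rfl⟩)
      · have : m - y < c := by
          by_contra h; exact hmy (hc _ (by omega))
        exact ⟨hm, hsub _ hm, by omega⟩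
      · exact ⟨hny, by omega, by omega⟩
  have eq2 : Γ ∩ Set.Ico 0 (N - y) = Ap Γ (-y) ∪ D := by
    ext n
    simp only [Set.mem_inter_iff, Set.mem_Ico, Ap, Set.mem_setOf_eq, Set.mem_union,
      sub_neg_eq_add, hD]
    constructor
    · rintro ⟨hn, h0, hn'⟩
      by_cases hny : n + y ∈ Γ
      · exact Or.inr ⟨⟨hn, hny⟩, h0, hn'⟩
      · exact Or.inl ⟨hn, hny⟩
    · rintro (⟨hn, hny⟩ | ⟨⟨hn, hny⟩, h0, hn'⟩)
      · have : n + y < c := by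
          by_contra h; exact hny (hc _ (by omega))
        exact ⟨hn, hsub _ hn, by omega⟩
      · exact ⟨hn, h0, hn'⟩
  have finD : D.Finite := (Set.finite_Ico (0:ℤ) (N - y)).subset Set.inter_subset_right
  have finApy : (Ap Γ y).Finite := by
    refine (Set.finite_Ico (0:ℤ) N).subset ?_
    rintro m ⟨hm, hmy⟩
    have : m - y < c := by by_contra h; exact hmy (hc _ (by omega))
    exact Set.mem_Ico.mpr ⟨hsub _ hm, by omega⟩
  have finApny : (Ap Γ (-y)).Finite := by
    refine (Set.finite_Ico (0:ℤ) (N - y)).subset ?_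
    rintro n ⟨hn, hny⟩
    rw [sub_neg_eq_add] at hny
    have : n + y < c := by by_contra h; exact hny (hc _ (by omega))
    exact Set.mem_Ico.mpr ⟨hsub _ hn, by omega⟩
  have disj1 : Disjoint (Ap Γ y) ((fun n => n + y) '' D) := by
    rw [Set.disjoint_left]
    rintro m ⟨hm, hmy⟩ ⟨n, ⟨⟨hn, hny⟩, _⟩, rfl⟩
    exact hmy (by simpa using hn)
  have disj2 : Disjoint (Ap Γ (-y)) D := by
    rw [Set.disjoint_left]
    rintro n ⟨hn, hny⟩ ⟨⟨_, hny'⟩, _⟩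
    rw [sub_neg_eq_add] at hny
    exact hny hny'
  rw [eq1, eq2, Set.ncard_union_eq disj1 finApy (finD.image _),
    Set.ncard_union_eq disj2 finApny finD,
    Set.ncard_image_of_injective _ (add_left_injective y)]
  omega

theorem apery_between_distances (Γ : Set ℤ) (hΓ : IsNumericalSemigroup Γ)
    (hA : IsArf Γ) (ρ : ℕ → ℤ)
    (hmono : ∀ i j, 1 ≤ i → i < j → ρ i < ρ j)
    (hrange : Γ = {x : ℤ | ∃ i : ℕ, 1 ≤ i ∧ ρ i = x})
    (j : ℕ) (hj : 2 ≤ j) (x : ℤ) (hx : 0 < x)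
    (h1 : ρ (j + 1) - ρ j ≤ x) (h2 : x < ρ j - ρ (j - 1)) :
    Ap Γ (-(ρ (j + 1) - ρ j)) ⊆ Ap Γ (-x) ∧
    (Ap Γ (ρ (j + 1) - ρ j)).ncard ≤ (Ap Γ x).ncard := by
  obtain ⟨hsub, h0Γ, hadd, hfin⟩ := hΓ
  set d : ℤ := ρ (j + 1) - ρ j with hd
  have hmem : ∀ k : ℕ, 1 ≤ k → ρ k ∈ Γ := by
    intro k hk; rw [hrange]; exact ⟨k, hk, rfl⟩
  have hidx : ∀ m ∈ Γ, ∃ k : ℕ, 1 ≤ k ∧ ρ k = m := by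
    intro m hm; rw [hrange] at hm; exact hm
  have hj1 : 1 ≤ j := by omega
  have hd_pos : 0 < d := sub_pos.mpr (hmono j (j + 1) hj1 (by omega))
  -- distances are non-increasing
  have dmono : ∀ i : ℕ, 1 ≤ i → ρ (i + 2) - ρ (i + 1) ≤ ρ (i + 1) - ρ i := by
    intro i hi
    have hρi : ρ i < ρ (i + 1) := hmono i (i + 1) hi (by omega)
    have harf := hA _ (hmem (i + 1) (by omega)) _ (hmem (i + 1) (by omega)) _
      (hmem i hi) hρi.le le_rfl
    obtain ⟨m, hm1, hm2⟩ := hidx _ harf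
    have hgt : ρ (i + 1) < ρ m := by omega
    have hm' : i + 1 < m := by
      by_contra h
      push_neg at h
      rcases eq_or_lt_of_le h with h' | h'
      · subst h'; omega
      · exact absurd (hmono m (i + 1) hm1 h') (by omega)
    have : ρ (i + 2) ≤ ρ m := by
      rcases eq_or_lt_of_le (show i + 2 ≤ m by omega) with h' | h'
      · rw [h']
      · exact (hmono (i + 2) m (by omega) h').le
    omega
  have dchain : ∀ a b : ℕ, 1 ≤ a → a ≤ b → ρ (b + 1) - ρ b ≤ ρ (a + 1) - ρ a := by
    intro a b ha hab
    induction b, hab using Nat.le_induction with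
    | base => exact le_rfl
    | succ n hn ih => exact le_trans (dmono n (by omega)) ih
  -- Part 1: the inclusion
  have hincl : Ap Γ (-d) ⊆ Ap Γ (-x) := by
    rintro m ⟨hmΓ, hmd⟩
    rw [sub_neg_eq_add] at hmd
    refine ⟨hmΓ, ?_⟩
    rw [sub_neg_eq_add]
    intro hmx
    obtain ⟨k, hk1, hkm⟩ := hidx m hmΓ
    obtain ⟨l, hl1, hlm⟩ := hidx _ hmx
    have hkl : k < l := by
      by_contra h
      push_neg at h
      rcases eq_or_lt_of_le h with h' | h'
      · subst h'; omega
      · exact absurd (hmono l k hl1 h') (by omega)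
    have hk1l : ρ (k + 1) ≤ ρ l := by
      rcases eq_or_lt_of_le (show k + 1 ≤ l by omega) with h' | h'
      · rw [h']
      · exact (hmono (k + 1) l (by omega) h').le
    have hdk : ρ (k + 1) - ρ k ≤ x := by omega
    have hjk : j ≤ k := by
      by_contra h
      push_neg at h
      have hch := dchain k (j - 1) hk1 (by omega)
      have hjj : j - 1 + 1 = j := by omega
      rw [hjj] at hch
      omega
    rcases eq_or_lt_of_le hjk with heq | hlt
    · subst heq
      have : m + d = ρ (j + 1) := by omega
      exact hmd (this ▸ hmem (j + 1) (by omega))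
    · have hρk : ρ (j + 1) ≤ ρ k := by
        rcases eq_or_lt_of_le (show j + 1 ≤ k by omega) with h' | h'
        · rw [h']
        · exact (hmono (j + 1) k (by omega) h').le
      have harf := hA _ (hmem k hk1) _ (hmem (j + 1) (by omega)) _ (hmem j hj1)
        (hmono j (j + 1) hj1 (by omega)).le hρk
      have : ρ k + ρ (j + 1) - ρ j = m + d := by omega
      exact hmd (this ▸ harf)
  refine ⟨hincl, ?_⟩
  -- Part 2: the cardinality inequality
  obtain ⟨B, hB⟩ := hfin.bddAbove
  set c : ℤ := max (B + 1) 0 with hcdef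
  have hc : ∀ n, c ≤ n → n ∈ Γ := by
    intro n hn
    by_contra h
    have : n ∈ {n : ℤ | 0 ≤ n ∧ n ∉ Γ} := ⟨by omega, h⟩
    have := hB this
    omega
  set N : ℤ := c + x with hN
  have key_x := count_key Γ hsub c N x hc hx le_rfl
  have key_d := count_key Γ hsub c N d hc hd_pos (by omega)
  have finIcoNd : (Γ ∩ Set.Ico 0 (N - d)).Finite :=
    (Set.finite_Ico (0:ℤ) (N - d)).subset Set.inter_subset_right
  have c1 : (Γ ∩ Set.Ico 0 (N - x)).ncard ≤ (Γ ∩ Set.Ico 0 (N - d)).ncard := by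
    refine Set.ncard_le_ncard ?_ finIcoNd
    exact Set.inter_subset_inter_right _ (Set.Ico_subset_Ico le_rfl (by omega))
  have finApnx : (Ap Γ (-x)).Finite := by
    refine (Set.finite_Ico (0:ℤ) c).subset ?_
    rintro n ⟨hn, hnx⟩
    rw [sub_neg_eq_add] at hnx
    have : n + x < c := by by_contra h; exact hnx (hc _ (by omega))
    exact Set.mem_Ico.mpr ⟨hsub _ hn, by omega⟩
  have c2 : (Ap Γ (-d)).ncard ≤ (Ap Γ (-x)).ncard :=
    Set.ncard_le_ncard hincl finApnx
  omega
end

section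
/- Let Γ be an Arf numerical semigroup with multiplicity sequence (d₁, …, d_r). Then the second Feng-Rao number of Γ equals min{d₁, d₂ + 1, …, d_{r−1} + r − 2, r}. -/
namespace FRAux

/-- Elements `s ∈ Γ` with `s + x ∉ Γ`. -/
def TT (Γ : Set ℤ) (x : ℤ) : Set ℤ := {s : ℤ | s ∈ Γ ∧ s + x ∉ Γ}

variable {Γ : Set ℤ} {ρ : ℕ → ℤ} {r : ℕ}

lemma rho_mem (hrange : Γ = {x : ℤ | ∃ i : ℕ, 1 ≤ i ∧ ρ i = x}) {i : ℕ} (hi : 1 ≤ i) :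
    ρ i ∈ Γ := by rw [hrange]; exact ⟨i, hi, rfl⟩

lemma rho_le (hmono : ∀ i j, 1 ≤ i → i < j → ρ i < ρ j) {i j : ℕ} (hi : 1 ≤ i) (hij : i ≤ j) :
    ρ i ≤ ρ j := by
  rcases eq_or_lt_of_le hij with h | h
  · rw [h]
  · exact (hmono i j hi h).le

lemma next_le (hmono : ∀ i j, 1 ≤ i → i < j → ρ i < ρ j)
    (hrange : Γ = {x : ℤ | ∃ i : ℕ, 1 ≤ i ∧ ρ i = x})
    {i : ℕ} {a : ℤ} (hi : 1 ≤ i) (ha : a ∈ Γ) (h : ρ i < a) :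
    ρ (i + 1) ≤ a := by
  rw [hrange] at ha
  obtain ⟨j, hj, rfl⟩ := ha
  have hij : i < j := by
    by_contra hcc
    push_neg at hcc
    exact absurd (rho_le hmono hj hcc) (not_le.2 h)
  exact rho_le hmono (by omega) (by omega)

lemma gap (hmono : ∀ i j, 1 ≤ i → i < j → ρ i < ρ j)
    (hrange : Γ = {x : ℤ | ∃ i : ℕ, 1 ≤ i ∧ ρ i = x})
    {i : ℕ} {b : ℤ} (hi : 1 ≤ i) (h1 : ρ i < b) (h2 : b < ρ (i + 1)) :
    b ∉ Γ := fun hb => absurd (next_le hmono hrange hi hb h1) (not_le.2 h2)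

lemma d_pos (hmono : ∀ i j, 1 ≤ i → i < j → ρ i < ρ j) {i : ℕ} (hi : 1 ≤ i) :
    1 ≤ ρ (i + 1) - ρ i := by
  have := hmono i (i + 1) hi (by omega); omega

lemma d_anti (hA : IsArf Γ) (hmono : ∀ i j, 1 ≤ i → i < j → ρ i < ρ j)
    (hrange : Γ = {x : ℤ | ∃ i : ℕ, 1 ≤ i ∧ ρ i = x})
    {i j : ℕ} (hi : 1 ≤ i) (hij : i ≤ j) :
    ρ (j + 1) - ρ j ≤ ρ (i + 1) - ρ i := by
  induction j, hij using Nat.le_induction with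
  | base => exact le_rfl
  | succ j hij ih =>
      have hj : 1 ≤ j := le_trans hi hij
      have h1 : ρ (j + 1) + ρ (j + 1) - ρ j ∈ Γ :=
        hA _ (rho_mem hrange (by omega)) _ (rho_mem hrange (by omega)) _ (rho_mem hrange hj)
          (hmono j (j + 1) hj (by omega)).le le_rfl
      have h2 : ρ (j + 1) < ρ (j + 1) + ρ (j + 1) - ρ j := by
        have := hmono j (j + 1) hj (by omega); omega
      have h3 := next_le hmono hrange (i := j + 1) (by omega) h1 h2
      omega

lemma d_two (hA : IsArf Γ) (hmono : ∀ i j, 1 ≤ i → i < j → ρ i < ρ j)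
    (hrange : Γ = {x : ℤ | ∃ i : ℕ, 1 ≤ i ∧ ρ i = x})
    (hc : IsConductor Γ (ρ r)) {i : ℕ} (hi : 1 ≤ i) (hir : i < r) :
    2 ≤ ρ (i + 1) - ρ i := by
  by_contra h
  push_neg at h
  have hd1 : ρ (i + 1) - ρ i = 1 := by have := d_pos hmono hi; omega
  have hstep : ∀ t : ℕ, ρ (i + t) = ρ i + t := by
    intro t
    induction t with
    | zero => simp
    | succ t ih =>
        have key : i + (t + 1) = (i + t) + 1 := by omega
        rw [key]
        have h1 : 1 ≤ ρ (i + t + 1) - ρ (i + t) := d_pos hmono (by omega)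
        have h2 : ρ (i + t + 1) - ρ (i + t) ≤ ρ (i + 1) - ρ i :=
          d_anti hA hmono hrange hi (by omega)
        push_cast
        omega
  have hall : ∀ n, ρ i ≤ n → n ∈ Γ := by
    intro n hn
    have htn : ((n - ρ i).toNat : ℤ) = n - ρ i := Int.toNat_of_nonneg (by omega)
    have h3 : ρ (i + (n - ρ i).toNat) = n := by rw [hstep]; omega
    rw [← h3]; exact rho_mem hrange (by omega)
  have h4 := hc.2 _ hall
  have h5 := hmono i r hi hir
  omega

lemma ap_count (hΓ : IsNumericalSemigroup Γ) (hc : IsConductor Γ (ρ r)) {x : ℤ} (hx : 1 ≤ x) :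
    ((Ap Γ x).ncard : ℤ) = x + ((TT Γ x).ncard : ℤ) := by
  set c := ρ r with hcdef
  have hcond : ∀ n, c ≤ n → n ∈ Γ := hc.1
  have hnotmem : ∀ n, n ∉ Γ → n < c := fun n hn => by
    by_contra hh; exact hn (hcond n (by omega))
  have hnn : ∀ n ∈ Γ, 0 ≤ n := hΓ.1
  set B := {s : ℤ | s ∈ Γ ∧ s < c} with hB
  set G := {s : ℤ | s ∈ Γ ∧ s < c + x} with hG
  set H := (fun s : ℤ => s + x) '' B with hH
  have hBfin : B.Finite := (Set.finite_Ico 0 c).subset (fun s hs => ⟨hnn s hs.1, hs.2⟩)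
  have hGfin : G.Finite := (Set.finite_Ico 0 (c + x)).subset (fun s hs => ⟨hnn s hs.1, hs.2⟩)
  have hHfin : H.Finite := hBfin.image _
  have hinj : Function.Injective (fun s : ℤ => s + x) := fun a b hab => by simpa using hab
  have hGsplit : G = B ∪ Set.Ico c (c + x) := by
    ext s
    simp only [hG, hB, Set.mem_union, Set.mem_setOf_eq, Set.mem_Ico]
    constructor
    · rintro ⟨h1, h2⟩
      rcases lt_or_ge s c with hh | hh
      · exact Or.inl ⟨h1, hh⟩
      · exact Or.inr ⟨hh, h2⟩
    · rintro (⟨h1, h2⟩ | ⟨h1, h2⟩)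
      · exact ⟨h1, by omega⟩
      · exact ⟨hcond s h1, h2⟩
  have hGcard : G.ncard = B.ncard + x.toNat := by
    have hd : Disjoint B (Set.Ico c (c + x)) := by
      rw [Set.disjoint_left]
      rintro s ⟨_, h2⟩ h3
      exact absurd h3.1 (by omega)
    rw [hGsplit, Set.ncard_union_eq hd hBfin (Set.finite_Ico _ _)]
    congr 1
    rw [← Finset.coe_Ico, Set.ncard_coe_finset, Int.card_Ico]
    congr 1
    omega
  have hHcard : H.ncard = B.ncard := Set.ncard_image_of_injective _ hinj
  have hApGH : Ap Γ x = G \ H := by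
    ext m
    simp only [Ap, Set.mem_setOf_eq, Set.mem_diff, hG, hH, hB, Set.mem_image]
    constructor
    · rintro ⟨hm, hmx⟩
      refine ⟨⟨hm, ?_⟩, ?_⟩
      · have := hnotmem _ hmx; omega
      · rintro ⟨s, hs, hsx⟩
        exact hmx (by rw [show m - x = s by omega]; exact hs.1)
    · rintro ⟨⟨hm, hlt⟩, hnH⟩
      refine ⟨hm, fun hmem => hnH ⟨m - x, ⟨hmem, by omega⟩, by ring⟩⟩
  have hTHG : (fun s : ℤ => s + x) '' (TT Γ x) = H \ G := by
    ext a
    simp only [TT, Set.mem_image, Set.mem_diff, hH, hG, hB, Set.mem_setOf_eq]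
    constructor
    · rintro ⟨s, ⟨hs1, hs2⟩, rfl⟩
      have hsc : s + x < c := hnotmem _ hs2
      exact ⟨⟨s, ⟨hs1, by omega⟩, rfl⟩, fun hG' => hs2 hG'.1⟩
    · rintro ⟨⟨s, hsB, rfl⟩, hnG⟩
      refine ⟨s, ⟨hsB.1, fun hmem => hnG ⟨hmem, by omega⟩⟩, rfl⟩
  have hTcard : (TT Γ x).ncard = (H \ G).ncard := by
    rw [← hTHG, Set.ncard_image_of_injective _ hinj]
  have e1 := Set.ncard_inter_add_ncard_diff_eq_ncard G H hGfin
  have e2 := Set.ncard_inter_add_ncard_diff_eq_ncard H G hHfin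
  have hic : (G ∩ H).ncard = (H ∩ G).ncard := by rw [Set.inter_comm]
  have hxtn : (x.toNat : ℤ) = x := Int.toNat_of_nonneg (by omega)
  rw [hApGH, hTcard]
  omega

lemma TT_card_le (hrange : Γ = {x : ℤ | ∃ i : ℕ, 1 ≤ i ∧ ρ i = x}) {x : ℤ} {k : ℕ} (hk : 1 ≤ k)
    (h : ∀ m : ℕ, k ≤ m → 1 ≤ m → ρ m + x ∈ Γ) :
    ((TT Γ x).ncard : ℤ) ≤ (k : ℤ) - 1 := by
  have hsub : TT Γ x ⊆ ρ '' ↑(Finset.Icc 1 (k - 1)) := by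
    rintro s ⟨hs1, hs2⟩
    rw [hrange] at hs1
    obtain ⟨m, hm, rfl⟩ := hs1
    refine ⟨m, ?_, rfl⟩
    simp only [Finset.coe_Icc, Set.mem_Icc]
    refine ⟨hm, ?_⟩
    by_contra hmk
    push_neg at hmk
    exact hs2 (h m (by omega) hm)
  have h1 : (TT Γ x).ncard ≤ (ρ '' ↑(Finset.Icc 1 (k - 1))).ncard :=
    Set.ncard_le_ncard hsub ((Finset.Icc 1 (k - 1)).finite_toSet.image _)
  have h2 : (ρ '' ↑(Finset.Icc 1 (k - 1))).ncard ≤ (↑(Finset.Icc 1 (k - 1)) : Set ℕ).ncard :=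
    Set.ncard_image_le (Finset.finite_toSet _)
  rw [Set.ncard_coe_finset, Nat.card_Icc] at h2
  omega

lemma TT_card_ge (hΓ : IsNumericalSemigroup Γ)
    (hmono : ∀ i j, 1 ≤ i → i < j → ρ i < ρ j)
    (hrange : Γ = {x : ℤ | ∃ i : ℕ, 1 ≤ i ∧ ρ i = x})
    (hc : IsConductor Γ (ρ r)) {x : ℤ} (hx : 1 ≤ x) {j : ℕ}
    (h : ∀ m : ℕ, 1 ≤ m → m < j → x < ρ (m + 1) - ρ m) :
    (j : ℤ) - 1 ≤ ((TT Γ x).ncard : ℤ) := by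
  have hTfin : (TT Γ x).Finite := by
    refine (Set.finite_Ico 0 (ρ r)).subset (fun s hs => ?_)
    have h1 := hΓ.1 s hs.1
    have h2 : s + x < ρ r := by
      by_contra hh; exact hs.2 (hc.1 _ (by omega))
    exact ⟨h1, by omega⟩
  have hsub : ρ '' ↑(Finset.Icc 1 (j - 1)) ⊆ TT Γ x := by
    rintro s ⟨m, hm, rfl⟩
    simp only [Finset.coe_Icc, Set.mem_Icc] at hm
    refine ⟨rho_mem hrange hm.1, ?_⟩
    have hmj : m < j := by omega
    have hd := h m hm.1 hmj
    exact gap hmono hrange hm.1 (by omega) (by omega)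
  have hcard : (ρ '' ↑(Finset.Icc 1 (j - 1))).ncard = (Finset.Icc 1 (j - 1)).card := by
    rw [← Set.ncard_coe_finset]
    refine Set.ncard_image_of_injOn (fun a ha b hb hab => ?_)
    simp only [Finset.coe_Icc, Set.mem_Icc] at ha hb
    rcases lt_trichotomy a b with hh | hh | hh
    · exact absurd hab (ne_of_lt (hmono a b ha.1 hh))
    · exact hh
    · exact absurd hab.symm (ne_of_lt (hmono b a hb.1 hh))
  have hle := Set.ncard_le_ncard hsub hTfin
  rw [hcard, Nat.card_Icc] at hle
  omega

end FRAux

open FRAux in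
theorem frnumber_arf (Γ : Set ℤ) (hΓ : IsNumericalSemigroup Γ)
    (hA : IsArf Γ) (ρ : ℕ → ℤ)
    (hmono : ∀ i j, 1 ≤ i → i < j → ρ i < ρ j)
    (hrange : Γ = {x : ℤ | ∃ i : ℕ, 1 ≤ i ∧ ρ i = x})
    (hρ1 : ρ 1 = 0)
    (r : ℕ) (hr : 1 ≤ r) (hc : IsConductor Γ (ρ r)) :
    ((FengRaoNumber2 Γ (ρ 2) : ℤ)) =
      sInf ({z : ℤ | ∃ i : ℕ, 1 ≤ i ∧ i ≤ r - 1 ∧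
        z = (ρ (i + 1) - ρ i) + (i : ℤ) - 1} ∪ {(r : ℤ)}) := by
  classical
  set R : Set ℤ := {z : ℤ | ∃ i : ℕ, 1 ≤ i ∧ i ≤ r - 1 ∧
      z = (ρ (i + 1) - ρ i) + (i : ℤ) - 1} ∪ {(r : ℤ)} with hRdef
  set S : Set ℕ := {n : ℕ | ∃ x : ℤ, 1 ≤ x ∧ x ≤ ρ 2 ∧ (Ap Γ x).ncard = n} with hSdef
  have he : 1 ≤ ρ 2 := by have := hmono 1 2 le_rfl (by omega); omega
  have hrR : (r : ℤ) ∈ R := Or.inr rfl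
  have hRfin : R.Finite := by
    refine Set.Finite.subset
      (Set.Finite.union
        ((Finset.Icc 1 (r - 1)).finite_toSet.image
          (fun i : ℕ => (ρ (i + 1) - ρ i) + (i : ℤ) - 1))
        (Set.finite_singleton (r : ℤ))) ?_
    rintro z (⟨i, h1, h2, rfl⟩ | hz)
    · exact Or.inl ⟨i, by simp only [Finset.coe_Icc, Set.mem_Icc]; omega, rfl⟩
    · exact Or.inr hz
  have hbdd : BddBelow R := hRfin.bddBelow
  have hMmem : sInf R ∈ R := Set.Nonempty.csInf_mem ⟨_, hrR⟩ hRfin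
  -- Lower bound: every value in S is at least sInf R
  have hlow : ∀ n ∈ S, sInf R ≤ (n : ℤ) := by
    rintro n ⟨x, hx1, hxe, rfl⟩
    have hcount := ap_count (ρ := ρ) (r := r) hΓ hc hx1
    by_cases hP : ∃ i : ℕ, 1 ≤ i ∧ i ≤ r - 1 ∧ ρ (i + 1) - ρ i ≤ x
    · set j := Nat.find hP with hjdef
      have hspec := Nat.find_spec hP
      have hTge := TT_card_ge hΓ hmono hrange hc hx1 (j := j) (fun m hm1 hmj => by
        have hnm := Nat.find_min hP hmj
        push_neg at hnm
        have := hnm hm1 (by omega)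
        omega)
      have hmem : (ρ (j + 1) - ρ j) + (j : ℤ) - 1 ∈ R :=
        Or.inl ⟨j, hspec.1, hspec.2.1, rfl⟩
      have hinf := csInf_le hbdd hmem
      have hdx : ρ (j + 1) - ρ j ≤ x := hspec.2.2
      omega
    · push_neg at hP
      have hTge := TT_card_ge hΓ hmono hrange hc hx1 (j := r) (fun m hm1 hmr => by
        have := hP m hm1 (by omega)
        omega)
      have hinf := csInf_le hbdd hrR
      omega
  -- Upper bound: some value in S is at most sInf R
  have hup : ∃ n ∈ S, (n : ℤ) ≤ sInf R := by
    rcases hMmem with ⟨i, hi1, hir, hMeq⟩ | hMr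
    · -- sInf R = d_i + i - 1 ; take x = d_i
      have hdi1 : 1 ≤ ρ (i + 1) - ρ i := d_pos hmono hi1
      have hdie : ρ (i + 1) - ρ i ≤ ρ 2 := by
        have hda := d_anti hA hmono hrange (i := 1) (j := i) le_rfl hi1
        have h12 : ρ (1 + 1) = ρ 2 := by norm_num
        omega
      have hTle := TT_card_le hrange (x := ρ (i + 1) - ρ i) (k := i) hi1 (fun m hm hm1 => by
        rcases eq_or_lt_of_le hm with hmi | hmi
        · have h' : ρ m + (ρ (i + 1) - ρ i) = ρ (i + 1) := by rw [← hmi]; ring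
          rw [h']; exact rho_mem hrange (by omega)
        · have harf := hA (ρ m) (rho_mem hrange hm1) (ρ (i + 1)) (rho_mem hrange (by omega))
            (ρ i) (rho_mem hrange hi1)
            (rho_le hmono hi1 (by omega)) (rho_le hmono (by omega) (by omega))
          have h' : ρ m + (ρ (i + 1) - ρ i) = ρ m + ρ (i + 1) - ρ i := by ring
          rw [h']; exact harf)
      refine ⟨(Ap Γ (ρ (i + 1) - ρ i)).ncard, ⟨_, hdi1, hdie, rfl⟩, ?_⟩
      have hcount := ap_count (ρ := ρ) (r := r) hΓ hc hdi1
      rw [hMeq]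
      omega
    · -- sInf R = r ; take x = 1
      have hMr' : sInf R = (r : ℤ) := hMr
      have hTle := TT_card_le hrange (x := 1) (k := r) hr (fun m hm hm1 => by
        have := rho_le hmono hr hm
        exact hc.1 _ (by omega))
      refine ⟨(Ap Γ 1).ncard, ⟨1, le_rfl, he, rfl⟩, ?_⟩
      have hcount := ap_count (ρ := ρ) (r := r) hΓ hc (le_refl (1 : ℤ))
      omega
  obtain ⟨n, hnS, hnle⟩ := hup
  have h1 : sInf S ≤ n := Nat.sInf_le hnS
  have h2 : sInf S ∈ S := Nat.sInf_mem ⟨n, hnS⟩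
  have h3 := hlow _ h2
  have hfr : FengRaoNumber2 Γ (ρ 2) = sInf S := rfl
  rw [hfr]
  omega
end

section
/- Let Γ be an Arf numerical semigroup and e' a nonzero element of Γ. Then E(Γ_{e'}, 2) = min{e', E(Γ, 2) + 1}, where Γ_{e'} = {0} ∪ (e' + Γ). -/
section FRAux

variable {S : Set ℤ} {x : ℤ}


variable {S : Set ℤ} {x : ℤ}

lemma ap_eq_diff (hS : IsNumericalSemigroup S) (x : ℤ) :
    Ap S x = {n : ℤ | 0 ≤ n ∧ n - x ∉ S} \ {n : ℤ | 0 ≤ n ∧ n ∉ S} := by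
  ext m
  simp only [Ap, Set.mem_setOf_eq, Set.mem_diff, Set.mem_setOf_eq]
  constructor
  · rintro ⟨hm, hmx⟩
    exact ⟨⟨hS.1 m hm, hmx⟩, fun h => h.2 hm⟩
  · rintro ⟨⟨h0, hmx⟩, h⟩
    refine ⟨?_, hmx⟩
    by_contra hm
    exact h ⟨h0, hm⟩

lemma G'_eq (hS : IsNumericalSemigroup S) (hx : 0 ≤ x) :
    {n : ℤ | 0 ≤ n ∧ n - x ∉ S} =
      (Set.Ico 0 x) ∪ (fun n => n + x) '' {n : ℤ | 0 ≤ n ∧ n ∉ S} := by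
  ext n
  simp only [Set.mem_setOf_eq, Set.mem_union, Set.mem_Ico, Set.mem_image]
  constructor
  · rintro ⟨h0, hnx⟩
    rcases lt_or_ge n x with h | h
    · exact Or.inl ⟨h0, h⟩
    · exact Or.inr ⟨n - x, ⟨by omega, hnx⟩, by ring⟩
  · rintro (⟨h0, h⟩ | ⟨g, ⟨hg0, hg⟩, rfl⟩)
    · refine ⟨h0, fun hmem => ?_⟩
      have := hS.1 _ hmem; omega
    · exact ⟨by omega, by simpa using hg⟩

lemma G'_finite (hS : IsNumericalSemigroup S) (hx : 0 ≤ x) :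
    {n : ℤ | 0 ≤ n ∧ n - x ∉ S}.Finite := by
  rw [G'_eq hS hx]
  exact (Set.finite_Ico 0 x).union (hS.2.2.2.image _)

lemma G'_card (hS : IsNumericalSemigroup S) (hx : 0 ≤ x) :
    {n : ℤ | 0 ≤ n ∧ n - x ∉ S}.ncard =
      x.toNat + {n : ℤ | 0 ≤ n ∧ n ∉ S}.ncard := by
  rw [G'_eq hS hx, Set.ncard_union_eq ?_ (Set.finite_Ico 0 x) (hS.2.2.2.image _)]
  · congr 1
    · rw [← Finset.coe_Ico, Set.ncard_coe_finset, Int.card_Ico]; omega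
    · exact Set.ncard_image_of_injective _ (add_left_injective x)
  · rw [Set.disjoint_left]
    rintro a ha ⟨g, ⟨hg0, _⟩, rfl⟩
    simp only [Set.mem_Ico] at ha
    omega

lemma ap_finite (hS : IsNumericalSemigroup S) (hx : 0 ≤ x) : (Ap S x).Finite := by
  rw [ap_eq_diff hS]
  exact (G'_finite hS hx).subset Set.diff_subset

lemma ncard_Ap_of_mem (hS : IsNumericalSemigroup S) (hx : x ∈ S) :
    (Ap S x).ncard = x.toNat := by
  have hx0 : 0 ≤ x := hS.1 x hx
  have hsub : {n : ℤ | 0 ≤ n ∧ n ∉ S} ⊆ {n : ℤ | 0 ≤ n ∧ n - x ∉ S} := by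
    rintro n ⟨h0, hn⟩
    refine ⟨h0, fun h => hn ?_⟩
    have := hS.2.2.1 x hx (n - x) h
    simpa using this
  rw [ap_eq_diff hS, Set.ncard_diff hsub hS.2.2.2, G'_card hS hx0]
  omega

lemma ncard_Ap_ge (hS : IsNumericalSemigroup S) (hx : 0 ≤ x) :
    x.toNat ≤ (Ap S x).ncard := by
  have h1 : {n : ℤ | 0 ≤ n ∧ n - x ∉ S} ⊆
      ({n : ℤ | 0 ≤ n ∧ n - x ∉ S} \ {n : ℤ | 0 ≤ n ∧ n ∉ S}) ∪ {n : ℤ | 0 ≤ n ∧ n ∉ S} := by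
    intro a ha
    by_cases h : a ∈ {n : ℤ | 0 ≤ n ∧ n ∉ S}
    · exact Or.inr h
    · exact Or.inl ⟨ha, h⟩
  have h2 := Set.ncard_le_ncard h1
    ((((G'_finite hS hx).subset Set.diff_subset).union hS.2.2.2))
  have h3 := Set.ncard_union_le
    ({n : ℤ | 0 ≤ n ∧ n - x ∉ S} \ {n : ℤ | 0 ≤ n ∧ n ∉ S}) {n : ℤ | 0 ≤ n ∧ n ∉ S}
  rw [G'_card hS hx] at h2
  rw [ap_eq_diff hS]
  omega

end FRAux

section FRShift

variable {Γ : Set ℤ} {e' x : ℤ}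


variable {Γ : Set ℤ} {e' x : ℤ}

lemma mem_shift_iff : x ∈ ShiftSG Γ e' ↔ x = 0 ∨ ∃ s ∈ Γ, x = e' + s := by
  simp only [ShiftSG, Set.mem_union, Set.mem_singleton_iff, Set.mem_image]
  constructor
  · rintro (h | ⟨s, hs, rfl⟩)
    · exact Or.inl h
    · exact Or.inr ⟨s, hs, rfl⟩
  · rintro (h | ⟨s, hs, rfl⟩)
    · exact Or.inl h
    · exact Or.inr ⟨s, hs, rfl⟩

lemma shift_nsg (hΓ : IsNumericalSemigroup Γ) (he' : e' ∈ Γ) (hne : e' ≠ 0) :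
    IsNumericalSemigroup (ShiftSG Γ e') := by
  have he0 : 0 < e' := lt_of_le_of_ne (hΓ.1 e' he') (Ne.symm hne)
  refine ⟨?_, Or.inl rfl, ?_, ?_⟩
  · intro n hn
    rcases mem_shift_iff.1 hn with rfl | ⟨s, hs, rfl⟩
    · exact le_refl 0
    · have := hΓ.1 s hs; omega
  · intro a ha b hb
    rcases mem_shift_iff.1 ha with rfl | ⟨s, hs, rfl⟩
    · simpa using hb
    rcases mem_shift_iff.1 hb with rfl | ⟨t, ht, rfl⟩
    · simpa using ha
    · refine mem_shift_iff.2 (Or.inr ⟨s + (e' + t), ?_, by ring⟩)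
      exact hΓ.2.2.1 s hs _ (hΓ.2.2.1 e' he' t ht)
  · refine Set.Finite.subset ((Set.finite_Ico 0 e').union
      ((hΓ.2.2.2).image (fun n => e' + n))) ?_
    rintro n ⟨h0, hn⟩
    rcases lt_or_ge n e' with h | h
    · exact Or.inl ⟨h0, h⟩
    · refine Or.inr ⟨n - e', ⟨by omega, fun hmem => hn ?_⟩, by ring⟩
      exact mem_shift_iff.2 (Or.inr ⟨n - e', hmem, by ring⟩)

lemma ap_shift (hΓ : IsNumericalSemigroup Γ) (he' : e' ∈ Γ)
    (hx1 : 1 ≤ x) (hxe : x < e') :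
    Ap (ShiftSG Γ e') x = insert 0 ((fun s => e' + s) '' Ap Γ x) := by
  have he0 : 0 < e' := by omega
  ext m
  simp only [Ap, Set.mem_setOf_eq, Set.mem_insert_iff, Set.mem_image]
  constructor
  · rintro ⟨hm, hmx⟩
    rcases mem_shift_iff.1 hm with rfl | ⟨s, hs, rfl⟩
    · exact Or.inl rfl
    · refine Or.inr ⟨s, ⟨hs, fun hsx => hmx ?_⟩, rfl⟩
      exact mem_shift_iff.2 (Or.inr ⟨s - x, hsx, by ring⟩)
  · rintro (rfl | ⟨s, ⟨hs, hsx⟩, rfl⟩)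
    · refine ⟨mem_shift_iff.2 (Or.inl rfl), fun h => ?_⟩
      rcases mem_shift_iff.1 h with h | ⟨t, ht, h⟩
      · omega
      · have := hΓ.1 t ht; omega
    · have hs0 := hΓ.1 s hs
      refine ⟨mem_shift_iff.2 (Or.inr ⟨s, hs, rfl⟩), fun h => ?_⟩
      rcases mem_shift_iff.1 h with h | ⟨t, ht, h⟩
      · omega
      · refine hsx ?_
        have ht' : s - x = t := by omega
        rw [ht']; exact ht

lemma ncard_ap_shift {Γ : Set ℤ} {e' x : ℤ} (hΓ : IsNumericalSemigroup Γ) (he' : e' ∈ Γ)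
    (hx1 : 1 ≤ x) (hxe : x < e') :
    (Ap (ShiftSG Γ e') x).ncard = (Ap Γ x).ncard + 1 := by
  rw [ap_shift hΓ he' hx1 hxe]
  have he0 : 0 < e' := by omega
  have hfin : ((fun s => e' + s) '' Ap Γ x).Finite := (ap_finite hΓ (by omega)).image _
  rw [Set.ncard_insert_of_notMem ?_ hfin,
    Set.ncard_image_of_injective _ (add_right_injective e')]
  rintro ⟨s, hs, hs0⟩
  have h1 := hΓ.1 s hs.1
  have h2 : e' + s = 0 := hs0
  omega


end FRShift

theorem frnumber_trans (Γ : Set ℤ) (hΓ : IsNumericalSemigroup Γ)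
    (hA : IsArf Γ) (e : ℤ) (he : IsMultiplicity Γ e)
    (e' : ℤ) (he' : e' ∈ Γ) (hne : e' ≠ 0) :
    (FengRaoNumber2 (ShiftSG Γ e') e' : ℤ) =
      min e' ((FengRaoNumber2 Γ e : ℤ) + 1) := by
  have he0 : 0 < e' := lt_of_le_of_ne (hΓ.1 e' he') (Ne.symm hne)
  have he1 : 0 < e := lt_of_le_of_ne (hΓ.1 e he.1) (Ne.symm he.2.1)
  have hee' : e ≤ e' := he.2.2 e' he' hne
  have hΓ' := shift_nsg hΓ he' hne
  have he'Γ' : e' ∈ ShiftSG Γ e' := mem_shift_iff.2 (Or.inr ⟨0, hΓ.2.1, by ring⟩)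
  unfold FengRaoNumber2
  set A := {n : ℕ | ∃ x : ℤ, 1 ≤ x ∧ x ≤ e' ∧ (Ap (ShiftSG Γ e') x).ncard = n} with hA'
  set B := {n : ℕ | ∃ x : ℤ, 1 ≤ x ∧ x ≤ e ∧ (Ap Γ x).ncard = n} with hB'
  have hBmem : e.toNat ∈ B := ⟨e, by omega, le_refl e, ncard_Ap_of_mem hΓ he.1⟩
  have hAmem : e'.toNat ∈ A := ⟨e', by omega, le_refl e', ncard_Ap_of_mem hΓ' he'Γ'⟩
  set E := sInf B with hE
  have hEle : E ≤ e.toNat := Nat.sInf_le hBmem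
  obtain ⟨x₀, hx₀1, hx₀e, hx₀E⟩ := Nat.sInf_mem (⟨_, hBmem⟩ : B.Nonempty)
  have key : sInf A = min e'.toNat (E + 1) := by
    apply le_antisymm
    · rcases le_or_gt e'.toNat (E + 1) with h | h
      · rw [min_eq_left h]; exact Nat.sInf_le hAmem
      · rw [min_eq_right h.le]
        have hx₀e' : x₀ < e' := by
          by_contra hc
          have := ncard_Ap_ge hΓ (by omega : (0:ℤ) ≤ x₀)
          omega
        refine Nat.sInf_le ⟨x₀, hx₀1, by omega, ?_⟩
        rw [ncard_ap_shift hΓ he' hx₀1 hx₀e', hx₀E]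
    · refine le_csInf ⟨_, hAmem⟩ ?_
      rintro n ⟨x, hx1, hxe', rfl⟩
      rcases eq_or_lt_of_le hxe' with rfl | hxlt
      · rw [ncard_Ap_of_mem hΓ' he'Γ']
        exact min_le_left _ _
      · rw [ncard_ap_shift hΓ he' hx1 hxlt]
        rcases le_or_gt x e with hxle | hxgt
        · have hmem : (Ap Γ x).ncard ∈ B := ⟨x, hx1, hxle, rfl⟩
          have := Nat.sInf_le hmem
          exact le_trans (min_le_right _ _) (by omega)
        · have h1 := ncard_Ap_ge hΓ (by omega : (0:ℤ) ≤ x)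
          have h2 : e.toNat + 1 ≤ x.toNat := by omega
          exact le_trans (min_le_right _ _) (by omega)
  rw [key]
  push_cast
  omega
end

section
/- Let Γ be a numerical semigroup, e' ∈ Γ nonzero, and m ∈ Γ. Then the set of divisors of 2e' + m in Γ_{e'} equals (e' + D_Γ(m)) ∪ {0, 2e' + m}, and this union is disjoint. -/
theorem divisors_trans (Γ : Set ℤ) (hΓ : IsNumericalSemigroup Γ)
    (e' : ℤ) (he' : e' ∈ Γ) (hne : e' ≠ 0) (m : ℤ) (hm : m ∈ Γ) :
    SetDiv (ShiftSG Γ e') (2 * e' + m) =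
      ((fun s => e' + s) '' SetDiv Γ m) ∪ {0, 2 * e' + m} ∧
    Disjoint ((fun s => e' + s) '' SetDiv Γ m) {0, 2 * e' + m} ∧
    (0 : ℤ) ≠ 2 * e' + m := by
  obtain ⟨hnonneg, h0, hadd, -⟩ := hΓ
  have he'pos : 0 < e' := lt_of_le_of_ne (hnonneg e' he') (Ne.symm hne)
  have hmnn : 0 ≤ m := hnonneg m hm
  refine ⟨?_, ?_, by omega⟩
  · ext s
    simp only [SetDiv, ShiftSG, Set.mem_union, Set.mem_image, Set.mem_singleton_iff,
      Set.mem_setOf_eq, Set.mem_insert_iff]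
    constructor
    · rintro ⟨hs1, hs2⟩
      rcases hs1 with h | ⟨t, ht, rfl⟩
      · right; left; exact h
      · rcases hs2 with h | ⟨u, hu, hequ⟩
        · right; right; omega
        · have hu' : u = m - t := by omega
          left
          exact ⟨t, ⟨ht, by rw [← hu']; exact hu⟩, rfl⟩
    · rintro (⟨t, ⟨ht, ht2⟩, rfl⟩ | rfl | rfl)
      · exact ⟨Or.inr ⟨t, ht, rfl⟩, Or.inr ⟨m - t, ht2, by ring⟩⟩
      · exact ⟨Or.inl rfl, Or.inr ⟨e' + m, hadd e' he' m hm, by ring⟩⟩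
      · exact ⟨Or.inr ⟨e' + m, hadd e' he' m hm, by ring⟩, Or.inl (by ring)⟩
  · rw [Set.disjoint_right]
    rintro x (rfl | rfl) ⟨t, ⟨ht, ht2⟩, hx⟩ <;> dsimp only at hx
    · have := hnonneg t ht; omega
    · have : t = e' + m := by omega
      have := hnonneg (m - t) ht2; omega
end

section
/- Let Γ be a numerical semigroup, e' ∈ Γ nonzero, and m, m' ∈ Γ. Then D_{Γ_{e'}}(2e'+m) ∪ D_{Γ_{e'}}(2e'+m') = (e' + (D_Γ(m) ∪ D_Γ(m'))) ∪ {0, 2e'+m, 2e'+m'}. If moreover |m − m'| < e', this union is disjoint, and hence #(D_Γ(m) ∪ D_Γ(m')) + 2 ≤ #(D_{Γ_{e'}}(2e'+m) ∪ D_{Γ_{e'}}(2e'+m')) ≤ #(D_Γ(m) ∪ D_Γ(m')) + 3. -/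
lemma shift_div_eq (Γ : Set ℤ) (hpos : ∀ n ∈ Γ, 0 ≤ n) (hzero : (0:ℤ) ∈ Γ)
    (hadd : ∀ a ∈ Γ, ∀ b ∈ Γ, a + b ∈ Γ) (e' : ℤ) (he' : e' ∈ Γ)
    (μ : ℤ) (hμ : μ ∈ Γ) :
    SetDiv (ShiftSG Γ e') (2 * e' + μ) =
      ((fun s => e' + s) '' SetDiv Γ μ) ∪ {0, 2 * e' + μ} := by
  ext s
  simp only [SetDiv, ShiftSG, Set.mem_union, Set.mem_image, Set.mem_insert_iff,
    Set.mem_singleton_iff, Set.mem_setOf_eq, Set.mem_sep_iff]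
  constructor
  · rintro ⟨h1, h2⟩
    rcases h1 with h1 | ⟨t, ht, rfl⟩
    · right; left; exact h1
    · rcases h2 with h2 | ⟨u, hu, h2⟩
      · right; right; omega
      · left; refine ⟨t, ⟨ht, ?_⟩, rfl⟩
        have : μ - t = u := by omega
        rw [this]; exact hu
  · rintro (⟨t, ⟨ht, hdt⟩, rfl⟩ | h | h)
    · exact ⟨Or.inr ⟨t, ht, rfl⟩, Or.inr ⟨μ - t, hdt, by ring⟩⟩
    · subst h
      exact ⟨Or.inl rfl, Or.inr ⟨e' + μ, hadd e' he' μ hμ, by ring⟩⟩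
    · subst h
      exact ⟨Or.inr ⟨e' + μ, hadd e' he' μ hμ, by ring⟩, Or.inl (by ring)⟩

theorem divisors_trans_pair (Γ : Set ℤ) (hΓ : IsNumericalSemigroup Γ)
    (e' : ℤ) (he' : e' ∈ Γ) (hne : e' ≠ 0)
    (m m' : ℤ) (hm : m ∈ Γ) (hm' : m' ∈ Γ) :
    (SetDiv (ShiftSG Γ e') (2 * e' + m) ∪ SetDiv (ShiftSG Γ e') (2 * e' + m') =
      ((fun s => e' + s) '' (SetDiv Γ m ∪ SetDiv Γ m')) ∪
        {0, 2 * e' + m, 2 * e' + m'}) ∧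
    (|m - m'| < e' →
      Disjoint ((fun s => e' + s) '' (SetDiv Γ m ∪ SetDiv Γ m'))
        ({0, 2 * e' + m, 2 * e' + m'} : Set ℤ) ∧
      (SetDiv Γ m ∪ SetDiv Γ m').ncard + 2 ≤
        (SetDiv (ShiftSG Γ e') (2 * e' + m) ∪
          SetDiv (ShiftSG Γ e') (2 * e' + m')).ncard ∧
      (SetDiv (ShiftSG Γ e') (2 * e' + m) ∪
          SetDiv (ShiftSG Γ e') (2 * e' + m')).ncard ≤
        (SetDiv Γ m ∪ SetDiv Γ m').ncard + 3) := by
  obtain ⟨hpos, hzero, hadd, _⟩ := hΓ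
  have he'pos : 0 < e' := lt_of_le_of_ne (hpos e' he') (Ne.symm hne)
  have hmpos : 0 ≤ m := hpos m hm
  have hm'pos : 0 ≤ m' := hpos m' hm'
  have hkey : SetDiv (ShiftSG Γ e') (2 * e' + m) ∪ SetDiv (ShiftSG Γ e') (2 * e' + m') =
      ((fun s => e' + s) '' (SetDiv Γ m ∪ SetDiv Γ m')) ∪
        {0, 2 * e' + m, 2 * e' + m'} := by
    rw [shift_div_eq Γ hpos hzero hadd e' he' m hm,
        shift_div_eq Γ hpos hzero hadd e' he' m' hm', Set.image_union]
    ext s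
    simp only [Set.mem_union, Set.mem_insert_iff, Set.mem_singleton_iff]
    tauto
  refine ⟨hkey, fun habs => ?_⟩
  -- bounds on divisors
  have hbound : ∀ μ : ℤ, ∀ s ∈ SetDiv Γ μ, 0 ≤ s ∧ s ≤ μ := by
    intro μ s hs
    exact ⟨hpos s hs.1, by have := hpos _ hs.2; omega⟩
  have hdisj : Disjoint ((fun s => e' + s) '' (SetDiv Γ m ∪ SetDiv Γ m'))
      ({0, 2 * e' + m, 2 * e' + m'} : Set ℤ) := by
    rw [Set.disjoint_left]
    rintro x ⟨t, ht, rfl⟩ hx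
    rcases ht with ht | ht
    · obtain ⟨h0, h1⟩ := hbound m t ht
      simp only [Set.mem_insert_iff, Set.mem_singleton_iff] at hx
      rcases abs_lt.mp habs with ⟨ha, hb⟩
      omega
    · obtain ⟨h0, h1⟩ := hbound m' t ht
      simp only [Set.mem_insert_iff, Set.mem_singleton_iff] at hx
      rcases abs_lt.mp habs with ⟨ha, hb⟩
      omega
  refine ⟨hdisj, ?_⟩
  -- finiteness
  have hfinD : (SetDiv Γ m ∪ SetDiv Γ m').Finite := by
    apply Set.Finite.subset (Set.finite_Icc 0 (max m m'))
    rintro s (hs | hs)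
    · obtain ⟨h0, h1⟩ := hbound m s hs
      exact Set.mem_Icc.mpr ⟨h0, le_trans h1 (le_max_left _ _)⟩
    · obtain ⟨h0, h1⟩ := hbound m' s hs
      exact Set.mem_Icc.mpr ⟨h0, le_trans h1 (le_max_right _ _)⟩
  have hfinA : (((fun s => e' + s) '' (SetDiv Γ m ∪ SetDiv Γ m'))).Finite :=
    hfinD.image _
  have hfinB : ({0, 2 * e' + m, 2 * e' + m'} : Set ℤ).Finite := by
    apply Set.Finite.insert; apply Set.Finite.insert; exact Set.finite_singleton _
  have hcardA : ((fun s => e' + s) '' (SetDiv Γ m ∪ SetDiv Γ m')).ncard =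
      (SetDiv Γ m ∪ SetDiv Γ m').ncard := by
    apply Set.ncard_image_of_injective
    intro a b hab
    simpa using hab
  have hcardU : (SetDiv (ShiftSG Γ e') (2 * e' + m) ∪
      SetDiv (ShiftSG Γ e') (2 * e' + m')).ncard =
      (SetDiv Γ m ∪ SetDiv Γ m').ncard +
        ({0, 2 * e' + m, 2 * e' + m'} : Set ℤ).ncard := by
    rw [hkey, Set.ncard_union_eq hdisj hfinA hfinB, hcardA]
  have hB2 : 2 ≤ ({0, 2 * e' + m, 2 * e' + m'} : Set ℤ).ncard := by
    have h0 : (0:ℤ) ∉ ({2 * e' + m, 2 * e' + m'} : Set ℤ) := by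
      simp only [Set.mem_insert_iff, Set.mem_singleton_iff]
      push_neg
      constructor <;> omega
    rw [Set.ncard_insert_of_notMem h0 (by
      apply Set.Finite.insert; exact Set.finite_singleton _)]
    have : 1 ≤ ({2 * e' + m, 2 * e' + m'} : Set ℤ).ncard := by
      have : 0 < ({2 * e' + m, 2 * e' + m'} : Set ℤ).ncard :=
        (Set.ncard_pos (by apply Set.Finite.insert; exact Set.finite_singleton _)).mpr
          ⟨2 * e' + m, Or.inl rfl⟩
      omega
    omega
  have hB3 : ({0, 2 * e' + m, 2 * e' + m'} : Set ℤ).ncard ≤ 3 :=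
    (Set.ncard_insert_le _ _).trans (by
      have := Set.ncard_insert_le (2 * e' + m) ({2 * e' + m'} : Set ℤ)
      simp only [Set.ncard_singleton] at this
      omega)
  omega
end

section
/- Let Γ be a numerical semigroup with conductor c and multiplicity e, and let m ≥ c be in Γ. Then min{#(D(m) ∪ D(m')) : m' ∈ Γ, m' > m} = min{#(D(m) ∪ D(m')) : m' ∈ Γ, m < m' ≤ m + e}. -/
lemma setDiv_finite (Γ : Set ℤ) (hΓ : IsNumericalSemigroup Γ) (x : ℤ) :
    (SetDiv Γ x).Finite := by
  apply (Set.finite_Icc 0 x).subset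
  rintro s ⟨h1, h2⟩
  have := hΓ.1 s h1
  have := hΓ.1 _ h2
  constructor <;> linarith

lemma step_ineq (Γ : Set ℤ) (hΓ : IsNumericalSemigroup Γ) (e : ℤ)
    (he : IsMultiplicity Γ e) (m m' : ℤ) :
    (SetDiv Γ m ∪ SetDiv Γ (m' - e)).ncard ≤ (SetDiv Γ m ∪ SetDiv Γ m').ncard := by
  obtain ⟨_, _, hadd, _⟩ := hΓ
  have hA := setDiv_finite Γ ⟨‹_›, ‹_›, hadd, ‹_›⟩ m
  have hB := setDiv_finite Γ ⟨‹_›, ‹_›, hadd, ‹_›⟩ m'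
  have hB' := setDiv_finite Γ ⟨‹_›, ‹_›, hadd, ‹_›⟩ (m' - e)
  have hsub : (fun s => s + e) '' (SetDiv Γ (m' - e) \ SetDiv Γ m) ⊆
      SetDiv Γ m' \ SetDiv Γ m := by
    rintro x ⟨s, ⟨⟨hs1, hs2⟩, hsA⟩, rfl⟩
    refine ⟨⟨hadd s hs1 e he.1, ?_⟩, ?_⟩
    · have : m' - (s + e) = m' - e - s := by ring
      rw [this]; exact hs2
    · rintro ⟨h1, h2⟩
      apply hsA
      refine ⟨hs1, ?_⟩
      have : m - s = (m - (s + e)) + e := by ring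
      rw [this]; exact hadd _ h2 e he.1
  calc (SetDiv Γ m ∪ SetDiv Γ (m' - e)).ncard
      = (SetDiv Γ m ∪ (SetDiv Γ (m' - e) \ SetDiv Γ m)).ncard := by
        rw [Set.union_diff_self]
    _ = (SetDiv Γ m).ncard + (SetDiv Γ (m' - e) \ SetDiv Γ m).ncard := by
        rw [Set.ncard_union_eq disjoint_sdiff_self_right hA hB'.diff]
    _ ≤ (SetDiv Γ m).ncard + (SetDiv Γ m' \ SetDiv Γ m).ncard := by
        apply Nat.add_le_add_left
        calc (SetDiv Γ (m' - e) \ SetDiv Γ m).ncard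
            = ((fun s => s + e) '' (SetDiv Γ (m' - e) \ SetDiv Γ m)).ncard := by
              rw [Set.ncard_image_of_injective _ (add_left_injective e)]
          _ ≤ (SetDiv Γ m' \ SetDiv Γ m).ncard :=
              Set.ncard_le_ncard hsub hB.diff
    _ = (SetDiv Γ m ∪ SetDiv Γ m').ncard := by
        rw [← Set.ncard_union_eq disjoint_sdiff_self_right hA hB.diff,
          Set.union_diff_self]

lemma reduce_lemma (Γ : Set ℤ) (hΓ : IsNumericalSemigroup Γ)
    (c e : ℤ) (hc : IsConductor Γ c) (he : IsMultiplicity Γ e)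
    (m : ℤ) (hmc : c ≤ m) (hepos : 0 < e) :
    ∀ k : ℕ, ∀ m' ∈ Γ, m < m' → m' ≤ m + k →
      ∃ m'' ∈ Γ, m < m'' ∧ m'' ≤ m + e ∧
        (SetDiv Γ m ∪ SetDiv Γ m'').ncard ≤ (SetDiv Γ m ∪ SetDiv Γ m').ncard := by
  intro k
  induction k with
  | zero => intro m' _ h1 h2; omega
  | succ k ih =>
    intro m' hm' h1 h2
    by_cases hle : m' ≤ m + e
    · exact ⟨m', hm', h1, hle, le_rfl⟩
    · push_neg at hle
      have hmem : m' - e ∈ Γ := hc.1 _ (by linarith)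
      obtain ⟨m'', h3, h4, h5, h6⟩ := ih (m' - e) hmem (by linarith) (by omega)
      exact ⟨m'', h3, h4, h5, h6.trans (step_ineq Γ hΓ e he m m')⟩

theorem min_up_to_multiplicity (Γ : Set ℤ) (hΓ : IsNumericalSemigroup Γ)
    (c e : ℤ) (hc : IsConductor Γ c) (he : IsMultiplicity Γ e)
    (m : ℤ) (hm : m ∈ Γ) (hmc : c ≤ m) :
    sInf {n : ℕ | ∃ m' ∈ Γ, m < m' ∧ (SetDiv Γ m ∪ SetDiv Γ m').ncard = n} =
    sInf {n : ℕ | ∃ m' ∈ Γ, m < m' ∧ m' ≤ m + e ∧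
      (SetDiv Γ m ∪ SetDiv Γ m').ncard = n} := by
  have hepos : 0 < e := lt_of_le_of_ne (hΓ.1 e he.1) (Ne.symm he.2.1)
  set S := {n : ℕ | ∃ m' ∈ Γ, m < m' ∧ (SetDiv Γ m ∪ SetDiv Γ m').ncard = n}
  set T := {n : ℕ | ∃ m' ∈ Γ, m < m' ∧ m' ≤ m + e ∧
      (SetDiv Γ m ∪ SetDiv Γ m').ncard = n}
  have hme : m + e ∈ Γ := hc.1 _ (by linarith)
  have hTne : T.Nonempty :=
    ⟨(SetDiv Γ m ∪ SetDiv Γ (m + e)).ncard, m + e, hme, by linarith, le_rfl, rfl⟩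
  have hSne : S.Nonempty := by
    obtain ⟨n, m', h1, h2, h3, h4⟩ := hTne
    exact ⟨n, m', h1, h2, h4⟩
  apply le_antisymm
  · apply Nat.sInf_le
    obtain ⟨m', h1, h2, h3, h4⟩ := Nat.sInf_mem hTne
    exact ⟨m', h1, h2, h4⟩
  · obtain ⟨m', h1, h2, h3⟩ := Nat.sInf_mem hSne
    obtain ⟨m'', h4, h5, h6, h7⟩ := reduce_lemma Γ hΓ c e hc he m hmc hepos
      (m' - m).toNat m' h1 h2 (by omega)
    calc sInf T ≤ (SetDiv Γ m ∪ SetDiv Γ m'').ncard :=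
          Nat.sInf_le ⟨m'', h4, h5, h6, rfl⟩
      _ ≤ (SetDiv Γ m ∪ SetDiv Γ m').ncard := h7
      _ = sInf S := h3
end

section
/- Let Γ be an Arf numerical semigroup with conductor c and multiplicity e ≥ 3. Then c + e − 2 is irreducible in Γ or c + e − 3 is irreducible in Γ. -/
lemma irr_of_aux (Γ : Set ℤ) (hΓ : IsNumericalSemigroup Γ) (hA : IsArf Γ)
    (e : ℤ) (he : IsMultiplicity Γ e) (m : ℤ) (hm : m ∈ Γ) (hm0 : m ≠ 0)
    (hme : m - e ∉ Γ) : IrreducibleIn Γ m := by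
  refine ⟨hm, hm0, ?_⟩
  ext s
  constructor
  · rintro ⟨hs, hms⟩
    by_contra hns
    simp only [Set.mem_insert_iff, Set.mem_singleton_iff, not_or] at hns
    obtain ⟨hs0, hsm⟩ := hns
    have hes : e ≤ s := he.2.2 s hs hs0
    have hms0 : m - s ≠ 0 := fun h => hsm (by linarith)
    have hems : e ≤ m - s := he.2.2 _ hms hms0
    rcases le_total s (m - s) with h | h
    · have := hA (m - s) hms s hs e he.1 hes h
      have : m - e ∈ Γ := by
        have h2 : m - s + s - e = m - e := by ring
        rwa [h2] at this
      exact hme this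
    · have := hA s hs (m - s) hms e he.1 hems h
      have : m - e ∈ Γ := by
        have h2 : s + (m - s) - e = m - e := by ring
        rwa [h2] at this
      exact hme this
  · rintro (rfl | rfl)
    · exact ⟨hΓ.2.1, by simpa using hm⟩
    · exact ⟨hm, by simpa using hΓ.2.1⟩

theorem irreducible_near_conductor (Γ : Set ℤ) (hΓ : IsNumericalSemigroup Γ)
    (hA : IsArf Γ) (c e : ℤ) (hc : IsConductor Γ c)
    (he : IsMultiplicity Γ e) (he3 : 3 ≤ e) :
    IrreducibleIn Γ (c + e - 2) ∨ IrreducibleIn Γ (c + e - 3) := by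
  have h1 : (1 : ℤ) ∉ Γ := fun h => by have := he.2.2 1 h one_ne_zero; omega
  have hc2 : 2 ≤ c := by
    by_contra h
    exact h1 (hc.1 1 (by omega))
  have hcm1 : c - 1 ∉ Γ := by
    intro h
    have : c ≤ c - 1 := hc.2 (c - 1) (fun n hn => by
      rcases eq_or_lt_of_le hn with rfl | h'
      · exact h
      · exact hc.1 n (by omega))
    omega
  by_cases hC2 : c - 2 ∈ Γ
  · by_cases hC3 : c - 3 ∈ Γ
    · exfalso
      have := hA (c - 2) hC2 (c - 2) hC2 (c - 3) hC3 (by omega) le_rfl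
      have h2 : c - 2 + (c - 2) - (c - 3) = c - 1 := by ring
      rw [h2] at this
      exact hcm1 this
    · right
      refine irr_of_aux Γ hΓ hA e he _ (hc.1 _ (by omega)) (by omega) ?_
      have h2 : c + e - 3 - e = c - 3 := by ring
      rwa [h2]
  · left
    refine irr_of_aux Γ hΓ hA e he _ (hc.1 _ (by omega)) (by omega) ?_
    have h2 : c + e - 2 - e = c - 2 := by ring
    rwa [h2]
end

section
/- Let c be an even integer greater than one and Γ = ⟨2, c+1⟩. Then the second Feng-Rao distance satisfies δ²(2) = 3, and δ²(m) = 4 for all m ∈ Γ with 2 < m ≤ c + 1. -/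
private def G (c : ℤ) : Set ℤ := {n : ℤ | (0 ≤ n ∧ 2 ∣ n) ∨ c + 1 ≤ n}

private lemma memG {c n : ℤ} : n ∈ G c ↔ (0 ≤ n ∧ 2 ∣ n) ∨ c + 1 ≤ n := Iff.rfl

private lemma mem_setdiv {Γ : Set ℤ} {x s : ℤ} :
    s ∈ SetDiv Γ x ↔ s ∈ Γ ∧ x - s ∈ Γ := Iff.rfl

private lemma setdiv_finite {c : ℤ} (hc1 : 1 < c) (x : ℤ) : (SetDiv (G c) x).Finite := by
  apply (Set.finite_Icc 0 x).subset
  intro s hs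
  rw [mem_setdiv] at hs
  have h1 := memG.mp hs.1
  have h2 := memG.mp hs.2
  simp only [Set.mem_Icc]
  omega

private lemma ncard3' {a b x : ℤ} (hab : a ≠ b) (hax : a ≠ x) (hbx : b ≠ x) :
    ({a, b, x} : Set ℤ).ncard = 3 := by
  rw [Set.ncard_insert_of_notMem (by simp [hab, hax]) ((Set.finite_singleton x).insert b),
    Set.ncard_pair hbx]

private lemma ncard4' {a b x y : ℤ} (hab : a ≠ b) (hax : a ≠ x) (hay : a ≠ y)
    (hbx : b ≠ x) (hby : b ≠ y) (hxy : x ≠ y) :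
    ({a, b, x, y} : Set ℤ).ncard = 4 := by
  rw [Set.ncard_insert_of_notMem (by simp [hab, hax, hay])
      (((Set.finite_singleton y).insert x).insert b),
    Set.ncard_insert_of_notMem (by simp [hbx, hby]) ((Set.finite_singleton y).insert x),
    Set.ncard_pair hxy]

private lemma D2eq {c : ℤ} (hc : 2 ∣ c) (hc1 : 1 < c) : SetDiv (G c) 2 = {0, 2} := by
  ext s
  simp only [mem_setdiv, memG, Set.mem_insert_iff, Set.mem_singleton_iff]
  omega

private lemma Dc1eq {c : ℤ} (hc : 2 ∣ c) (hc1 : 1 < c) :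
    SetDiv (G c) (c + 1) = {0, c + 1} := by
  ext s
  simp only [mem_setdiv, memG, Set.mem_insert_iff, Set.mem_singleton_iff]
  omega

private lemma Dc3eq {c : ℤ} (hc : 2 ∣ c) (hc1 : 1 < c) :
    SetDiv (G c) (c + 3) = {0, 2, c + 1, c + 3} := by
  ext s
  simp only [mem_setdiv, memG, Set.mem_insert_iff, Set.mem_singleton_iff]
  omega

theorem frdist2_mult2 (c : ℤ) (hc : Even c) (hc1 : 1 < c) :
    let Γ : Set ℤ := {n : ℤ | (0 ≤ n ∧ 2 ∣ n) ∨ c + 1 ≤ n}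
    FengRaoDist2 Γ 2 = 3 ∧
    ∀ m ∈ Γ, 2 < m → m ≤ c + 1 → FengRaoDist2 Γ m = 4 := by
  intro Γ
  have hc2 : (2 : ℤ) ∣ c := hc.two_dvd
  show FengRaoDist2 (G c) 2 = 3 ∧
    ∀ m ∈ G c, 2 < m → m ≤ c + 1 → FengRaoDist2 (G c) m = 4
  constructor
  · -- δ²(2) = 3
    have hmem : (3 : ℕ) ∈ {n : ℕ | ∃ m₁ ∈ G c, ∃ m₂ ∈ G c, (2:ℤ) ≤ m₁ ∧ m₁ < m₂ ∧
        (SetDiv (G c) m₁ ∪ SetDiv (G c) m₂).ncard = n} := by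
      refine ⟨2, memG.mpr (by omega), c + 1, memG.mpr (by omega), le_refl _, by omega, ?_⟩
      rw [D2eq hc2 hc1, Dc1eq hc2 hc1]
      have hu : ({0, 2} : Set ℤ) ∪ {0, c + 1} = {0, 2, c + 1} := by
        ext s
        simp only [Set.mem_union, Set.mem_insert_iff, Set.mem_singleton_iff]
        omega
      rw [hu]
      exact ncard3' (by omega) (by omega) (by omega)
    refine le_antisymm (Nat.sInf_le hmem) (le_csInf ⟨3, hmem⟩ ?_)
    rintro n ⟨m₁, hm₁, m₂, hm₂, h1, h2, rfl⟩
    have h1' := memG.mp hm₁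
    have h2' := memG.mp hm₂
    have hsub : ({0, m₁, m₂} : Set ℤ) ⊆ SetDiv (G c) m₁ ∪ SetDiv (G c) m₂ := by
      intro s hs
      simp only [Set.mem_insert_iff, Set.mem_singleton_iff] at hs
      simp only [Set.mem_union, mem_setdiv, memG]
      rcases hs with rfl | rfl | rfl <;> omega
    calc (3 : ℕ) = ({0, m₁, m₂} : Set ℤ).ncard :=
          (ncard3' (by omega) (by omega) (by omega)).symm
      _ ≤ _ := Set.ncard_le_ncard hsub ((setdiv_finite hc1 m₁).union (setdiv_finite hc1 m₂))
  · -- δ²(m) = 4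
    intro m hm hm2 hmc
    have hmem : (4 : ℕ) ∈ {n : ℕ | ∃ m₁ ∈ G c, ∃ m₂ ∈ G c, m ≤ m₁ ∧ m₁ < m₂ ∧
        (SetDiv (G c) m₁ ∪ SetDiv (G c) m₂).ncard = n} := by
      refine ⟨c + 1, memG.mpr (by omega), c + 3, memG.mpr (by omega), hmc, by omega, ?_⟩
      rw [Dc1eq hc2 hc1, Dc3eq hc2 hc1]
      have hu : ({0, c + 1} : Set ℤ) ∪ {0, 2, c + 1, c + 3} = {0, 2, c + 1, c + 3} := by
        ext s
        simp only [Set.mem_union, Set.mem_insert_iff, Set.mem_singleton_iff]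
        omega
      rw [hu]
      exact ncard4' (by omega) (by omega) (by omega) (by omega) (by omega) (by omega)
    refine le_antisymm (Nat.sInf_le hmem) (le_csInf ⟨4, hmem⟩ ?_)
    rintro n ⟨m₁, hm₁, m₂, hm₂, h1, h2, rfl⟩
    have hm' := memG.mp hm
    have h1' := memG.mp hm₁
    have h2' := memG.mp hm₂
    have hsub : ({0, 2, m₁, m₂} : Set ℤ) ⊆ SetDiv (G c) m₁ ∪ SetDiv (G c) m₂ := by
      intro s hs
      simp only [Set.mem_insert_iff, Set.mem_singleton_iff] at hs
      simp only [Set.mem_union, mem_setdiv, memG]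
      rcases hs with rfl | rfl | rfl | rfl <;> omega
    calc (4 : ℕ) = ({0, 2, m₁, m₂} : Set ℤ).ncard :=
          (ncard4' (by omega) (by omega) (by omega) (by omega) (by omega) (by omega)).symm
      _ ≤ _ := Set.ncard_le_ncard hsub ((setdiv_finite hc1 m₁).union (setdiv_finite hc1 m₂))
end

section
/- Let Γ be the ordinary numerical semigroup {0} ∪ (e + ℕ) with e ≥ 2. Then for m ∈ Γ: δ²(m) = 3 if e ≤ m < 2e − 1, and δ²(m) = m − (2e − 1) + 4 if m ≥ 2e − 1. -/
private def OS (e : ℤ) : Set ℤ := {n : ℤ | n = 0 ∨ e ≤ n}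

private lemma icc_ncard (a b : ℤ) : (Set.Icc a b).ncard = (b + 1 - a).toNat := by
  rw [← Finset.coe_Icc, Set.ncard_coe_finset, Int.card_Icc]

private lemma ncard_insert2 (a b x z : ℤ) (hxz : x ≠ z)
    (hx : x ∉ Set.Icc a b) (hz : z ∉ Set.Icc a b) :
    (insert x (insert z (Set.Icc a b))).ncard = 2 + (b + 1 - a).toNat := by
  rw [Set.ncard_insert_of_notMem (by simp [hxz, hx]) ((Set.finite_Icc a b).insert z),
      Set.ncard_insert_of_notMem hz (Set.finite_Icc a b), icc_ncard]
  omega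

private lemma ncard_insert3 (a b x y z : ℤ) (hxy : x ≠ y) (hxz : x ≠ z) (hyz : y ≠ z)
    (hx : x ∉ Set.Icc a b) (hy : y ∉ Set.Icc a b) (hz : z ∉ Set.Icc a b) :
    (insert x (insert y (insert z (Set.Icc a b)))).ncard = 3 + (b + 1 - a).toNat := by
  rw [Set.ncard_insert_of_notMem (by simp [hxy, hxz, hx])
        (((Set.finite_Icc a b).insert z).insert y),
      ncard_insert2 a b y z hyz hy hz]
  omega

private lemma setdiv_OS (e x : ℤ) (hx : e ≤ x) :
    SetDiv (OS e) x = insert 0 (insert x (Set.Icc e (x - e))) := by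
  ext s
  simp only [SetDiv, OS, Set.mem_setOf_eq, Set.mem_insert_iff, Set.mem_Icc]
  omega

private lemma union_setdiv (e m₁ m₂ : ℤ) (h1 : e ≤ m₁) (h2 : m₁ ≤ m₂) :
    SetDiv (OS e) m₁ ∪ SetDiv (OS e) m₂ =
      insert 0 (insert m₁ (insert m₂ (Set.Icc e (m₂ - e)))) := by
  rw [setdiv_OS e m₁ h1, setdiv_OS e m₂ (h1.trans h2)]
  ext s
  simp only [Set.mem_union, Set.mem_insert_iff, Set.mem_Icc]
  omega

private lemma lower_bound (e m : ℤ) (he : 2 ≤ e) (hm : e ≤ m) (n : ℕ)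
    (hn : ∃ m₁ ∈ OS e, ∃ m₂ ∈ OS e, m ≤ m₁ ∧ m₁ < m₂ ∧
      (SetDiv (OS e) m₁ ∪ SetDiv (OS e) m₂).ncard = n) :
    3 ≤ (n : ℤ) ∧ m - 2 * e + 5 ≤ (n : ℤ) := by
  obtain ⟨m₁, hm₁, m₂, hm₂, hle, hlt, hcard⟩ := hn
  have h1 : e ≤ m₁ := by
    rcases hm₁ with h | h <;> omega
  have h2 : e ≤ m₂ := by
    rcases hm₂ with h | h <;> omega
  rw [union_setdiv e m₁ m₂ h1 hlt.le] at hcard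
  by_cases hc : m₁ ≤ m₂ - e
  · have hmem : m₁ ∈ insert m₂ (Set.Icc e (m₂ - e)) := by
      simp only [Set.mem_insert_iff, Set.mem_Icc]; omega
    rw [Set.insert_eq_self.mpr hmem] at hcard
    rw [ncard_insert2 e (m₂ - e) 0 m₂ (by omega)
      (by simp only [Set.mem_Icc]; omega) (by simp only [Set.mem_Icc]; omega)] at hcard
    omega
  · rw [ncard_insert3 e (m₂ - e) 0 m₁ m₂ (by omega) (by omega) (by omega)
      (by simp only [Set.mem_Icc]; omega) (by simp only [Set.mem_Icc]; omega)
      (by simp only [Set.mem_Icc]; omega)] at hcard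
    omega

private lemma main_aux (e : ℤ) (he : 2 ≤ e) (m : ℤ) (hm : m ∈ OS e) :
    (e ≤ m → m < 2 * e - 1 → FengRaoDist2 (OS e) m = 3) ∧
      (2 * e - 1 ≤ m → (FengRaoDist2 (OS e) m : ℤ) = m - (2 * e - 1) + 4) := by
  unfold FengRaoDist2
  constructor
  · intro h1 h2
    have hmem : (3 : ℕ) ∈ {n : ℕ | ∃ m₁ ∈ OS e, ∃ m₂ ∈ OS e, m ≤ m₁ ∧ m₁ < m₂ ∧
        (SetDiv (OS e) m₁ ∪ SetDiv (OS e) m₂).ncard = n} := by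
      refine ⟨2 * e - 2, Or.inr (by omega), 2 * e - 1, Or.inr (by omega),
        by omega, by omega, ?_⟩
      rw [union_setdiv e (2 * e - 2) (2 * e - 1) (by omega) (by omega),
        ncard_insert3 e (2 * e - 1 - e) 0 (2 * e - 2) (2 * e - 1) (by omega) (by omega)
          (by omega) (by simp only [Set.mem_Icc]; omega) (by simp only [Set.mem_Icc]; omega)
          (by simp only [Set.mem_Icc]; omega)]
      omega
    refine le_antisymm (Nat.sInf_le hmem) ?_
    refine le_csInf ⟨3, hmem⟩ fun n hn => ?_
    have := lower_bound e m he h1 n hn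
    omega
  · intro h1
    have hmem : ((m - 2 * e + 5).toNat : ℕ) ∈ {n : ℕ | ∃ m₁ ∈ OS e, ∃ m₂ ∈ OS e,
        m ≤ m₁ ∧ m₁ < m₂ ∧ (SetDiv (OS e) m₁ ∪ SetDiv (OS e) m₂).ncard = n} := by
      refine ⟨m, Or.inr (by omega), m + 1, Or.inr (by omega), le_refl m, by omega, ?_⟩
      rw [union_setdiv e m (m + 1) (by omega) (by omega),
        ncard_insert3 e (m + 1 - e) 0 m (m + 1) (by omega) (by omega) (by omega)
          (by simp only [Set.mem_Icc]; omega) (by simp only [Set.mem_Icc]; omega)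
          (by simp only [Set.mem_Icc]; omega)]
      omega
    have heq : sInf {n : ℕ | ∃ m₁ ∈ OS e, ∃ m₂ ∈ OS e, m ≤ m₁ ∧ m₁ < m₂ ∧
        (SetDiv (OS e) m₁ ∪ SetDiv (OS e) m₂).ncard = n} = (m - 2 * e + 5).toNat := by
      refine le_antisymm (Nat.sInf_le hmem) ?_
      refine le_csInf ⟨_, hmem⟩ fun n hn => ?_
      have := lower_bound e m he (by omega) n hn
      omega
    rw [heq]
    omega

theorem frdist2_ordinary (e : ℤ) (he : 2 ≤ e) :
    let Γ : Set ℤ := {n : ℤ | n = 0 ∨ e ≤ n}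
    ∀ m ∈ Γ, (e ≤ m → m < 2 * e - 1 → FengRaoDist2 Γ m = 3) ∧
      (2 * e - 1 ≤ m → (FengRaoDist2 Γ m : ℤ) = m - (2 * e - 1) + 4) := by
  intro Γ m hm
  exact main_aux e he m hm
end

section
/- For the hyperelliptic semigroup Γ = ⟨2, 2g+1⟩ and any k ≥ 0, the first Feng-Rao distance of 2g + 2 + k equals the second Feng-Rao distance of 2g + k, i.e., δ¹(2g + 2 + k) = δ²(2g + k). -/
theorem hyperelliptic_fr1_eq_fr2 (g : ℤ) (hg : 1 ≤ g) (k : ℤ) (hk : 0 ≤ k) :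
    let Γ : Set ℤ := {n : ℤ | (0 ≤ n ∧ Even n) ∨ 2 * g + 1 ≤ n}
    FengRaoDist1 Γ (2 * g + 2 + k) = FengRaoDist2 Γ (2 * g + k) := by
  intro Γ
  have hnonneg : ∀ n ∈ Γ, (0:ℤ) ≤ n := by
    rintro n (⟨h, _⟩ | h)
    · exact h
    · linarith
  have hge : ∀ n : ℤ, 2 * g ≤ n → n ∈ Γ := by
    intro n hn
    rcases eq_or_lt_of_le hn with h | h
    · exact Or.inl ⟨by linarith, ⟨g, by omega⟩⟩
    · exact Or.inr (by linarith)
  have htwo : (2:ℤ) ∈ Γ := Or.inl ⟨by norm_num, ⟨1, by norm_num⟩⟩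
  have hone : (1:ℤ) ∉ Γ := by
    rintro (⟨_, a, ha⟩ | h) <;> omega
  have hadd : ∀ a ∈ Γ, ∀ b ∈ Γ, a + b ∈ Γ := by
    rintro a (⟨ha0, x, hx⟩ | ha) b hb
    · rcases hb with ⟨hb0, y, hy⟩ | hb
      · exact Or.inl ⟨by linarith, ⟨x + y, by omega⟩⟩
      · exact Or.inr (by linarith)
    · exact Or.inr (by have := hnonneg b hb; linarith)
  have hfin : ∀ x : ℤ, (SetDiv Γ x).Finite := by
    intro x
    apply (Set.finite_Icc 0 x).subset
    rintro s ⟨hs1, hs2⟩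
    exact ⟨hnonneg _ hs1, by have := hnonneg _ hs2; linarith⟩
  have key : ∀ m : ℤ, 2 * g ≤ m →
      (SetDiv Γ (m + 2)).ncard ≤ (SetDiv Γ m ∪ SetDiv Γ (m + 1)).ncard := by
    intro m hm
    have hfinU : (SetDiv Γ m ∪ SetDiv Γ (m + 1)).Finite := (hfin m).union (hfin (m + 1))
    have hm1U : m + 1 ∈ SetDiv Γ m ∪ SetDiv Γ (m + 1) := by
      right
      exact ⟨hge _ (by linarith), by
        have : m + 1 - (m + 1) = (0:ℤ) := by ring
        rw [this]
        exact Or.inl ⟨le_refl 0, ⟨0, by norm_num⟩⟩⟩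
    have hsub : SetDiv Γ (m + 2) \ {m + 2} ⊆ (SetDiv Γ m ∪ SetDiv Γ (m + 1)) \ {m + 1} := by
      rintro s ⟨⟨hsΓ, hu⟩, hne⟩
      simp only [Set.mem_singleton_iff] at hne
      constructor
      · rcases hu with ⟨h0, a, ha⟩ | hbig
        · -- m + 2 - s is even, nonneg, and nonzero (s ≠ m+2), so ≥ 2
          left
          refine ⟨hsΓ, Or.inl ⟨by omega, ⟨a - 1, by omega⟩⟩⟩
        · right
          exact ⟨hsΓ, hge _ (by omega)⟩
      · simp only [Set.mem_singleton_iff]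
        intro h
        apply hone
        have : m + 2 - s = (1:ℤ) := by omega
        rwa [this] at hu
    calc (SetDiv Γ (m + 2)).ncard
        ≤ (SetDiv Γ (m + 2) \ {m + 2}).ncard + 1 := by
          have hss : SetDiv Γ (m + 2) ⊆ insert (m + 2) (SetDiv Γ (m + 2) \ {m + 2}) := by
            intro x hx
            by_cases h : x = m + 2
            · exact Or.inl h
            · exact Or.inr ⟨hx, h⟩
          exact le_trans
            (Set.ncard_le_ncard hss (((hfin (m + 2)).diff).insert _))
            (Set.ncard_insert_le _ _)
      _ ≤ ((SetDiv Γ m ∪ SetDiv Γ (m + 1)) \ {m + 1}).ncard + 1 :=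
          Nat.add_le_add_right (Set.ncard_le_ncard hsub hfinU.diff) 1
      _ = (SetDiv Γ m ∪ SetDiv Γ (m + 1)).ncard :=
          Set.ncard_diff_singleton_add_one hm1U hfinU
  unfold FengRaoDist1 FengRaoDist2
  apply le_antisymm
  · -- δ¹ ≤ δ²
    have hBne : {n : ℕ | ∃ m₁ ∈ Γ, ∃ m₂ ∈ Γ, 2 * g + k ≤ m₁ ∧ m₁ < m₂ ∧
        (SetDiv Γ m₁ ∪ SetDiv Γ m₂).ncard = n}.Nonempty :=
      ⟨_, 2 * g + k, hge _ (by linarith), 2 * g + k + 1, hge _ (by linarith),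
        le_refl _, by linarith, rfl⟩
    obtain ⟨m₁, hm₁Γ, m₂, hm₂Γ, hle, hlt, hcard⟩ := Nat.sInf_mem hBne
    by_cases hc : 2 * g + 2 + k ≤ m₂
    · refine le_trans (Nat.sInf_le ⟨m₂, hm₂Γ, hc, rfl⟩) ?_
      rw [← hcard]
      exact Set.ncard_le_ncard Set.subset_union_right ((hfin m₁).union (hfin m₂))
    · have hm₁e : m₁ = 2 * g + k := by omega
      have hm₂e : m₂ = 2 * g + k + 1 := by omega
      refine le_trans (Nat.sInf_le ⟨2 * g + k + 2, hge _ (by linarith), by linarith, rfl⟩) ?_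
      rw [← hcard, hm₁e, hm₂e]
      exact key (2 * g + k) (by linarith)
  · -- δ² ≤ δ¹
    have hAne : {n : ℕ | ∃ m₁ ∈ Γ, 2 * g + 2 + k ≤ m₁ ∧ (SetDiv Γ m₁).ncard = n}.Nonempty :=
      ⟨_, 2 * g + 2 + k, hge _ (by linarith), le_refl _, rfl⟩
    obtain ⟨m₁, hm₁Γ, hle, hcard⟩ := Nat.sInf_mem hAne
    apply Nat.sInf_le
    refine ⟨m₁ - 2, hge _ (by linarith), m₁, hm₁Γ, by linarith, by linarith, ?_⟩
    rw [← hcard]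
    congr 1
    apply Set.union_eq_self_of_subset_left
    rintro s ⟨hsΓ, hs2⟩
    refine ⟨hsΓ, ?_⟩
    have h := hadd _ hs2 _ htwo
    rwa [show m₁ - 2 - s + 2 = m₁ - s by ring] at h
end
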